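/- arXiv:2409.04570 — 6 statements merged into one kernel-verified Lean document; each statement's English description precedes it below -/
import Mathlib

section
/- Let v be a pseudo-valuation on a field F. Then there exist a non-trivial pseudo-absolute value |·| on F (i.e., one attaining at least one value outside {0,1,∞}) and a real constant c > 0 such that v(x) = -c·log|x| for all x ∈ F (with conventions -log 0 = ∞ and -log ∞ = -∞). -/
open scoped ENNReal

/-- A pseudo-absolute value on a commutative ring `R`: a function `R → [0,∞]` with
`|0| = 0`, `|1| = 1`, `|x+y| ≤ |x|+|y|`, and `|xy| = |x|·|y|` whenever the product
`|x|·|y|` is defined (i.e. `{|x|,|y|} ≠ {0,∞}`). -/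
def IsPseudoAbsValue {R : Type*} [CommRing R] (f : R → ℝ≥0∞) : Prop :=
  f 0 = 0 ∧ f 1 = 1 ∧ (∀ x y, f (x + y) ≤ f x + f y) ∧
    ∀ x y, ¬((f x = 0 ∧ f y = ⊤) ∨ (f x = ⊤ ∧ f y = 0)) → f (x * y) = f x * f y

/-- A pseudo-valuation on a field `F`: a function `v : F → [-∞,∞]` attaining a value
outside `{-∞,0,∞}`, with `v 0 = ∞`, `v 1 = 0`, `v 2 ≠ -∞`, `v (xy) = v x + v y`
whenever the sum is defined (i.e. `{v x, v y} ≠ {-∞,∞}`), and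
`v (x+y) ≥ min (v x) (v y) + min (v 2) 0`. -/
def IsPseudoValuation {F : Type*} [Field F] (v : F → EReal) : Prop :=
  (∃ x, v x ∉ ({⊥, 0, ⊤} : Set EReal)) ∧ v 0 = ⊤ ∧ v 1 = 0 ∧ v 2 ≠ ⊥ ∧
    (∀ x y, ¬((v x = ⊥ ∧ v y = ⊤) ∨ (v x = ⊤ ∧ v y = ⊥)) → v (x * y) = v x + v y) ∧
    ∀ x y, min (v x) (v y) + min (v 2) 0 ≤ v (x + y)

namespace PVAux
open Finset


lemma neg_coe_mul_top {r : ℝ} (hr : r < 0) : (r : EReal) * ⊤ = ⊥ := EReal.coe_mul_top_of_neg hr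

lemma mul_eq_top_iff {r : ℝ} (hr : r < 0) (w : EReal) : (r : EReal) * w = ⊤ ↔ w = ⊥ := by
  induction w with
  | bot => simp [EReal.coe_mul_bot_of_neg hr]
  | coe t => simp [← EReal.coe_mul]
  | top => simp [EReal.coe_mul_top_of_neg hr]

lemma mul_eq_bot_iff {r : ℝ} (hr : r < 0) (w : EReal) : (r : EReal) * w = ⊥ ↔ w = ⊤ := by
  induction w with
  | bot => simp [EReal.coe_mul_bot_of_neg hr]
  | coe t => simp [← EReal.coe_mul]
  | top => simp [EReal.coe_mul_top_of_neg hr]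

lemma mul_add_distrib {r : ℝ} (hr : r < 0) (x y : EReal)
    (h : ¬((x = ⊥ ∧ y = ⊤) ∨ (x = ⊤ ∧ y = ⊥))) :
    (r : EReal) * (x + y) = (r : EReal) * x + (r : EReal) * y := by
  induction x with
  | bot =>
    induction y with
    | bot => simp [EReal.coe_mul_bot_of_neg hr]
    | coe t => simp [EReal.coe_mul_bot_of_neg hr, ← EReal.coe_mul]
    | top => exact absurd (Or.inl ⟨rfl, rfl⟩) h
  | coe s =>
    induction y with
    | bot => simp [EReal.coe_mul_bot_of_neg hr, ← EReal.coe_mul]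
    | coe t => norm_cast; ring
    | top => simp [EReal.coe_mul_top_of_neg hr, ← EReal.coe_mul]
  | top =>
    induction y with
    | bot => exact absurd (Or.inr ⟨rfl, rfl⟩) h
    | coe t => simp [EReal.coe_mul_top_of_neg hr, ← EReal.coe_mul]
    | top => simp [EReal.coe_mul_top_of_neg hr]

lemma mul_anti {a : ℝ} (ha : 0 ≤ a) {x y : EReal} (h : x ≤ y) :
    ((-a : ℝ) : EReal) * y ≤ ((-a : ℝ) : EReal) * x := by
  rw [show ((-a : ℝ) : EReal) = -(a : EReal) by norm_cast, neg_mul, neg_mul,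
    EReal.neg_le_neg_iff]
  exact mul_le_mul_of_nonneg_left h (by exact_mod_cast ha)



variable {F : Type*} [CommRing F] (f : F → ℝ≥0∞)

lemma sum_pow2 (h2 : ∀ x y, f (x + y) ≤ 2 * max (f x) (f y)) :
    ∀ (k : ℕ) (g : ℕ → F),
      f (∑ i ∈ range (2 ^ k), g i) ≤ 2 ^ k * (range (2 ^ k)).sup fun i => f (g i) := by
  intro k
  induction k with
  | zero => intro g; simpa using Finset.le_sup (f := fun i => f (g i)) (mem_range.mpr one_pos)
  | succ k ih =>
    intro g
    have hle : 2 ^ k ≤ 2 ^ (k + 1) := Nat.pow_le_pow_right (by norm_num) (Nat.le_succ k)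
    have hsplit : ∑ i ∈ range (2 ^ (k + 1)), g i
        = (∑ i ∈ range (2 ^ k), g i) + ∑ i ∈ range (2 ^ k), g (2 ^ k + i) := by
      have h5 : 2 ^ (k + 1) - 2 ^ k = 2 ^ k := by rw [pow_succ]; omega
      rw [← Finset.sum_range_add_sum_Ico g hle, Finset.sum_Ico_eq_sum_range, h5]
    have hsup1 : (range (2 ^ k)).sup (fun i => f (g i))
        ≤ (range (2 ^ (k + 1))).sup fun i => f (g i) :=
      Finset.sup_mono (Finset.range_subset_range.mpr hle)
    have hsup2 : (range (2 ^ k)).sup (fun i => f (g (2 ^ k + i)))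
        ≤ (range (2 ^ (k + 1))).sup fun i => f (g i) := by
      refine Finset.sup_le fun i hi => ?_
      refine Finset.le_sup (f := fun i => f (g i)) (mem_range.mpr ?_)
      have := mem_range.mp hi
      have : 2 ^ k + i < 2 ^ k + 2 ^ k := by omega
      calc 2 ^ k + i < 2 ^ k + 2 ^ k := this
        _ = 2 ^ (k + 1) := by ring
    calc f (∑ i ∈ range (2 ^ (k + 1)), g i)
        ≤ 2 * max (f (∑ i ∈ range (2 ^ k), g i)) (f (∑ i ∈ range (2 ^ k), g (2 ^ k + i))) := by
          rw [hsplit]; exact h2 _ _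
      _ ≤ 2 * max (2 ^ k * (range (2 ^ k)).sup fun i => f (g i))
            (2 ^ k * (range (2 ^ k)).sup fun i => f (g (2 ^ k + i))) := by
          exact mul_le_mul_right (max_le_max (ih g) (ih _)) 2
      _ ≤ 2 * (2 ^ k * (range (2 ^ (k + 1))).sup fun i => f (g i)) := by
          refine mul_le_mul_right (max_le ?_ ?_) 2 <;> exact mul_le_mul_right (by assumption) _
      _ = 2 ^ (k + 1) * (range (2 ^ (k + 1))).sup fun i => f (g i) := by ring

lemma sum_card (hf0 : f 0 = 0) (h2 : ∀ x y, f (x + y) ≤ 2 * max (f x) (f y))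
    (N : ℕ) (g : ℕ → F) :
    f (∑ i ∈ range N, g i) ≤ 2 * N * (range N).sup fun i => f (g i) := by
  rcases Nat.eq_zero_or_pos N with hN | hN
  · simp [hN, hf0]
  set k := Nat.log 2 N + 1 with hk
  have hN2k : N ≤ 2 ^ k := (Nat.lt_pow_succ_log_self (by norm_num) N).le
  have h2kN : 2 ^ k ≤ 2 * N := by
    rw [hk, pow_succ, mul_comm]
    exact Nat.mul_le_mul_left 2 (Nat.pow_log_le_self 2 hN.ne')
  set g' : ℕ → F := fun i => if i < N then g i else 0 with hg'
  have hsum : ∑ i ∈ range (2 ^ k), g' i = ∑ i ∈ range N, g i := by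
    rw [← Finset.sum_subset (Finset.range_subset_range.mpr hN2k)
      (fun x _ hx => by simp [hg', not_lt.mp (mem_range.not.mp hx)]
        )]
    exact Finset.sum_congr rfl fun i hi => by simp [hg', mem_range.mp hi]
  have hsup : ((range (2 ^ k)).sup fun i => f (g' i)) ≤ (range N).sup fun i => f (g i) := by
    refine Finset.sup_le fun i _ => ?_
    by_cases hi : i < N
    · simpa [hg', hi] using Finset.le_sup (f := fun i => f (g i)) (mem_range.mpr hi)
    · simp [hg', hi, hf0]
  calc f (∑ i ∈ range N, g i) = f (∑ i ∈ range (2 ^ k), g' i) := by rw [hsum]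
    _ ≤ 2 ^ k * (range (2 ^ k)).sup fun i => f (g' i) := sum_pow2 f h2 k g'
    _ ≤ (2 * N : ℕ) * (range N).sup fun i => f (g i) := by
        refine mul_le_mul' ?_ hsup
        exact_mod_cast (Nat.cast_le (α := ℝ≥0∞)).mpr h2kN
    _ = 2 * N * (range N).sup fun i => f (g i) := by push_cast; ring

lemma nat_mul (hf0 : f 0 = 0) (h2 : ∀ x y, f (x + y) ≤ 2 * max (f x) (f y))
    (C : ℕ) (z : F) : f ((C : F) * z) ≤ 2 * C * f z := by
  have h : (C : F) * z = ∑ _i ∈ range C, z := by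
    rw [Finset.sum_const, Finset.card_range, nsmul_eq_mul]
  rw [h]
  refine le_trans (sum_card f hf0 h2 C fun _ => z) ?_
  exact mul_le_mul_right (Finset.sup_le fun i _ => le_rfl) _



variable {F : Type*} [CommRing F] (f : F → ℝ≥0∞)

-- real-number conclusion step
lemma real_step {α β : ℝ} (hβ : 0 < β) (h : ∀ n : ℕ, α ^ n ≤ 4 * (n + 1) * β ^ n) :
    α ≤ β := by
  by_contra hab
  push_neg at hab
  have hα : 0 < α := hβ.trans hab
  set t : ℝ := α / β with htdef
  have ht1 : 1 < t := (one_lt_div hβ).mpr hab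
  have ht0 : 0 ≤ t := by linarith
  have htn : ∀ n : ℕ, t ^ n ≤ 4 * (n + 1) := by
    intro n
    rw [htdef, div_pow, div_le_iff₀ (pow_pos hβ n)]
    exact h n
  set s : ℝ := Real.sqrt t with hsdef
  have hs2 : s ^ 2 = t := Real.sq_sqrt ht0
  have hs1 : 1 < s := by
    nlinarith [Real.sqrt_nonneg t]
  set d : ℝ := s - 1 with hddef
  have hd0 : 0 < d := by linarith
  have hbern : ∀ n : ℕ, 1 + n * d ≤ s ^ n := by
    intro n
    have := one_add_mul_le_pow (a := d) (by linarith) n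
    simpa [hddef] using this
  set n : ℕ := ⌈(8 : ℝ) / d ^ 2⌉₊ + 1 with hndef
  have hn1 : 1 ≤ (n : ℝ) := by exact_mod_cast Nat.one_le_iff_ne_zero.mpr (by omega)
  have hnd : 8 < n * d ^ 2 := by
    have h1 : (8 : ℝ) / d ^ 2 ≤ ⌈(8 : ℝ) / d ^ 2⌉₊ := Nat.le_ceil _
    have h2 : ((⌈(8 : ℝ) / d ^ 2⌉₊ : ℝ)) < n := by
      rw [hndef]; push_cast; linarith
    have h3 : (8 : ℝ) / d ^ 2 < n := lt_of_le_of_lt h1 h2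
    calc (8 : ℝ) = (8 / d ^ 2) * d ^ 2 := by field_simp
      _ < n * d ^ 2 := by
          exact mul_lt_mul_of_pos_right h3 (by positivity)
  have hb := hbern n
  have htn' := htn n
  have ht : t ^ n = (s ^ n) ^ 2 := by rw [← hs2]; ring
  rw [ht] at htn'
  have h6 : (1 + (n : ℝ) * d) ^ 2 ≤ (s ^ n) ^ 2 := by
    have hpos : (0 : ℝ) ≤ 1 + (n : ℝ) * d := by positivity
    exact pow_le_pow_left₀ hpos hb 2
  have h7 : (8 : ℝ) * n < ((n : ℝ) * d ^ 2) * n := by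
    exact mul_lt_mul_of_pos_right hnd (by linarith)
  have h8 : (0 : ℝ) ≤ (n : ℝ) * d := by positivity
  nlinarith [h6, h7, h8]


lemma fpow (hf1 : f 1 = 1)
    (hmul : ∀ x y, ¬((f x = 0 ∧ f y = ⊤) ∨ (f x = ⊤ ∧ f y = 0)) → f (x * y) = f x * f y)
    {z : F} (hz : f z ≠ ⊤) : ∀ n : ℕ, f (z ^ n) = f z ^ n := by
  intro n
  induction n with
  | zero => simpa using hf1
  | succ n ih =>
    rw [pow_succ, hmul _ _ ?_, ih, pow_succ]
    rintro (⟨h1, h2⟩ | ⟨h1, h2⟩)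
    · exact hz h2
    · rw [ih] at h1; exact ENNReal.pow_ne_top hz h1

lemma triangle (hf0 : f 0 = 0) (hf1 : f 1 = 1)
    (hmul : ∀ x y, ¬((f x = 0 ∧ f y = ⊤) ∨ (f x = ⊤ ∧ f y = 0)) → f (x * y) = f x * f y)
    (h2 : ∀ x y, f (x + y) ≤ 2 * max (f x) (f y)) :
    ∀ x y, f (x + y) ≤ f x + f y := by
  intro x y
  by_cases hx : f x = ⊤
  · simp [hx]
  by_cases hy : f y = ⊤
  · simp [hy]
  have hmaxne : max (f x) (f y) ≠ ⊤ := by simp [hx, hy]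
  have hA : f (x + y) ≠ ⊤ :=
    ne_top_of_le_ne_top (by finiteness) (h2 x y)
  by_cases hB0 : f x + f y = 0
  · have hmax0 : max (f x) (f y) = 0 := by
      rw [add_eq_zero] at hB0
      simp [hB0.1, hB0.2]
    have h := h2 x y
    rw [hmax0, mul_zero, le_zero_iff] at h
    simp [h]
  -- key estimate
  have key : ∀ n : ℕ, f (x + y) ^ n ≤ ((4 * (n + 1) : ℕ) : ℝ≥0∞) * (f x + f y) ^ n := by
    intro n
    have hxy := add_pow x y n
    have e1 : f (x + y) ^ n = f ((x + y) ^ n) := (fpow f hf1 hmul hA n).symm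
    rw [e1, hxy]
    have hterm : ∀ k ∈ range (n + 1),
        f (x ^ k * y ^ (n - k) * (n.choose k : F))
          ≤ 2 * (n.choose k) * (f x ^ k * f y ^ (n - k)) := by
      intro k _
      rw [mul_comm (x ^ k * y ^ (n - k)) ((n.choose k : F))]
      refine le_trans (nat_mul f hf0 h2 _ _) ?_
      refine mul_le_mul_right ?_ _
      rw [hmul _ _ ?_, fpow f hf1 hmul hx, fpow f hf1 hmul hy]
      rw [fpow f hf1 hmul hx, fpow f hf1 hmul hy]
      rintro (⟨h1, hh2⟩ | ⟨h1, hh2⟩)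
      · exact ENNReal.pow_ne_top hy hh2
      · exact ENNReal.pow_ne_top hx h1
    have hsup : ((range (n + 1)).sup fun k => f (x ^ k * y ^ (n - k) * (n.choose k : F)))
        ≤ 2 * (f x + f y) ^ n := by
      refine Finset.sup_le fun k hk => ?_
      refine le_trans (hterm k hk) ?_
      have hmem : (2 : ℝ≥0∞) * (n.choose k) * (f x ^ k * f y ^ (n - k))
          ≤ ∑ j ∈ range (n + 1), 2 * (n.choose j) * (f x ^ j * f y ^ (n - j)) :=
        Finset.single_le_sum (f := fun j => 2 * (n.choose j : ℝ≥0∞) * (f x ^ j * f y ^ (n - j)))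
          (fun j _ => zero_le) hk
      refine le_trans hmem (le_of_eq ?_)
      rw [add_pow (f x) (f y) n, Finset.mul_sum]
      refine Finset.sum_congr rfl fun j _ => by ring
    calc f (∑ k ∈ range (n + 1), x ^ k * y ^ (n - k) * (n.choose k : F))
        ≤ 2 * (n + 1) * (range (n + 1)).sup
            (fun k => f (x ^ k * y ^ (n - k) * (n.choose k : F))) := by
          simpa using sum_card f hf0 h2 (n + 1) fun k => x ^ k * y ^ (n - k) * (n.choose k : F)
      _ ≤ 2 * (n + 1) * (2 * (f x + f y) ^ n) := mul_le_mul_right hsup _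
      _ = ((4 * (n + 1) : ℕ) : ℝ≥0∞) * (f x + f y) ^ n := by push_cast; ring
  -- transfer to ℝ
  have hBne : f x + f y ≠ ⊤ := by finiteness
  have hβ : 0 < (f x + f y).toReal := ENNReal.toReal_pos hB0 hBne
  have hreal : ∀ n : ℕ, (f (x + y)).toReal ^ n ≤ 4 * (n + 1) * (f x + f y).toReal ^ n := by
    intro n
    have h1 := key n
    have h2' : (((4 * (n + 1) : ℕ) : ℝ≥0∞) * (f x + f y) ^ n) ≠ ⊤ :=
      ENNReal.mul_ne_top (ENNReal.natCast_ne_top _) (ENNReal.pow_ne_top hBne)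
    have := ENNReal.toReal_mono h2' h1
    rw [ENNReal.toReal_pow] at this
    refine le_trans this (le_of_eq ?_)
    rw [ENNReal.toReal_mul, ENNReal.toReal_pow, ENNReal.toReal_natCast]
    push_cast
    ring
  have := real_step hβ hreal
  rw [← ENNReal.toReal_le_toReal hA hBne] at *
  exact this


end PVAux

open PVAux Finset

/-- Every pseudo-valuation `v` on a field `F` is of the form `v = -c·log|·|` for some
non-trivial pseudo-absolute value `|·|` on `F` and some real constant `c > 0` (with the
conventions `-log 0 = ∞` and `-log ∞ = -∞`). -/
theorem pseudoValuation_eq_neg_log_pseudoAbsValue {F : Type*} [Field F]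
    (v : F → EReal) (hv : IsPseudoValuation v) :
    ∃ (f : F → ℝ≥0∞) (c : ℝ), IsPseudoAbsValue f ∧
      (∃ x, f x ∉ ({0, 1, ⊤} : Set ℝ≥0∞)) ∧ 0 < c ∧
      ∀ x, v x = (-(c : EReal)) * ENNReal.log (f x) := by
  obtain ⟨⟨x0, hx0⟩, hv0, hv1, hv2, hmulv, haddv⟩ := hv
  -- the constant
  set m : EReal := min (v 2) 0 with hm
  have hm_bot : m ≠ ⊥ := by
    have : ⊥ < m := lt_min_iff.mpr ⟨bot_lt_iff_ne_bot.mpr hv2, by simp⟩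
    exact this.ne'
  have hm_top : m ≠ ⊤ := fun h => by
    have : m ≤ 0 := min_le_right _ _
    rw [h] at this
    exact absurd this (by simp)
  set r : ℝ := m.toReal with hrdef
  have hmr : (r : EReal) = m := EReal.coe_toReal hm_top hm_bot
  have hr0 : r ≤ 0 := by
    have h := min_le_right (v 2) 0
    rw [← hm, ← hmr] at h
    exact_mod_cast h
  set c : ℝ := max 1 (-r / Real.log 2) with hcdef
  have hc : 0 < c := lt_of_lt_of_le one_pos (le_max_left _ _)
  set a : ℝ := c⁻¹ with hadef
  have ha : 0 < a := inv_pos.mpr hc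
  have hna : (-a : ℝ) < 0 := neg_neg_iff_pos.mpr ha
  have hlog2 : 0 < Real.log 2 := Real.log_pos one_lt_two
  have hexp2 : Real.exp (a * (-r)) ≤ 2 := by
    have h1 : -r / Real.log 2 ≤ c := le_max_right _ _
    have h2 : -r ≤ c * Real.log 2 := by
      rw [div_le_iff₀ hlog2] at h1
      linarith
    have h3 : a * (-r) ≤ Real.log 2 := by
      rw [hadef, ← div_eq_inv_mul, div_le_iff₀ hc]
      linarith
    calc Real.exp (a * (-r)) ≤ Real.exp (Real.log 2) := Real.exp_le_exp.mpr h3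
      _ = 2 := Real.exp_log two_pos
  -- the absolute value
  set f : F → ℝ≥0∞ := fun x => EReal.exp (((-a : ℝ) : EReal) * v x) with hfdef
  have ftop : ∀ x, f x = ⊤ ↔ v x = ⊥ := fun x => by
    rw [hfdef]; exact EReal.exp_eq_top_iff.trans (mul_eq_top_iff hna _)
  have fzero : ∀ x, f x = 0 ↔ v x = ⊤ := fun x => by
    rw [hfdef]; exact EReal.exp_eq_zero_iff.trans (mul_eq_bot_iff hna _)
  have hf0 : f 0 = 0 := by
    rw [hfdef]; simp only [hv0, EReal.coe_mul_top_of_neg hna, EReal.exp_bot]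
  have hf1 : f 1 = 1 := by
    rw [hfdef]; simp only [hv1, mul_zero, EReal.exp_zero]
  have hfmul : ∀ x y, ¬((f x = 0 ∧ f y = ⊤) ∨ (f x = ⊤ ∧ f y = 0)) → f (x * y) = f x * f y := by
    intro x y h
    rw [fzero, ftop, fzero, ftop] at h
    have h' : ¬((v x = ⊥ ∧ v y = ⊤) ∨ (v x = ⊤ ∧ v y = ⊥)) := by tauto
    rw [hfdef]
    simp only
    rw [hmulv x y h', mul_add_distrib hna _ _ h', EReal.exp_add]
  -- the doubling estimate
  have h2max : ∀ x y, f (x + y) ≤ 2 * max (f x) (f y) := by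
    intro x y
    have hmin : EReal.exp (((-a : ℝ) : EReal) * min (v x) (v y)) = max (f x) (f y) := by
      rcases le_total (v x) (v y) with h | h
      · rw [min_eq_left h, max_eq_left (EReal.exp_monotone (mul_anti ha.le h))]
      · rw [min_eq_right h, max_eq_right (EReal.exp_monotone (mul_anti ha.le h))]
    have step1 : f (x + y) ≤ EReal.exp (((-a : ℝ) : EReal) * (min (v x) (v y) + m)) := by
      rw [hfdef]
      exact EReal.exp_monotone (mul_anti ha.le (haddv x y))
    have step2 : (((-a : ℝ) : EReal)) * (min (v x) (v y) + m)
        = ((-a : ℝ) : EReal) * min (v x) (v y) + ((a * (-r) : ℝ) : EReal) := by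
      rw [← hmr, mul_add_distrib hna _ _ (by simp [EReal.coe_ne_top, EReal.coe_ne_bot])]
      congr 1
      rw [← EReal.coe_mul]
      norm_cast
      ring
    refine le_trans step1 ?_
    rw [step2, EReal.exp_add, hmin, mul_comm]
    refine mul_le_mul_left ?_ _
    rw [EReal.exp_coe]
    calc ENNReal.ofReal (Real.exp (a * (-r))) ≤ ENNReal.ofReal 2 :=
          ENNReal.ofReal_le_ofReal hexp2
      _ = 2 := by norm_num
  have htri := triangle f hf0 hf1 hfmul h2max
  -- nontriviality
  have hnontriv : ∃ x, f x ∉ ({0, 1, ⊤} : Set ℝ≥0∞) := by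
    refine ⟨x0, ?_⟩
    simp only [Set.mem_insert_iff, Set.mem_singleton_iff, not_or] at hx0 ⊢
    obtain ⟨hb, h0, ht⟩ := hx0
    have hcoe : v x0 = ((v x0).toReal : EReal) := (EReal.coe_toReal ht hb).symm
    have ht0 : (v x0).toReal ≠ 0 := by
      intro h
      rw [h] at hcoe
      exact h0 (by simpa using hcoe)
    refine ⟨?_, ?_, ?_⟩
    · rw [fzero]; exact ht
    · rw [hfdef]
      simp only
      rw [hcoe, ← EReal.coe_mul]
      intro h
      rw [show (1 : ℝ≥0∞) = EReal.exp 0 from EReal.exp_zero.symm] at h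
      have := EReal.exp_strictMono.injective h
      have : (-a) * (v x0).toReal = 0 := by exact_mod_cast this
      rcases mul_eq_zero.mp this with h' | h'
      · linarith
      · exact ht0 h'
    · rw [ftop]; exact hb
  refine ⟨f, c, ⟨hf0, hf1, htri, hfmul⟩, hnontriv, hc, fun x => ?_⟩
  rw [hfdef]
  simp only
  rw [EReal.log_exp]
  rw [show (-(c : EReal)) = ((-c : ℝ) : EReal) by norm_cast]
  rw [← mul_assoc, ← EReal.coe_mul]
  rw [show (-c) * (-a) = 1 by rw [hadef]; field_simp]
  rw [EReal.coe_one, one_mul]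
end

section
/- Let h be a height on a field F. Then h is invariant under duplication of coordinates, addition of zero coordinates, and multiplication of a coordinate by a root of unity: for every tuple ξ ∈ Fⁿ, every x ∈ F, and every root of unity λ ∈ F×, one has h(ξ,x,x) = h(ξ,x,0) = h(ξ,λx) = h(ξ,x). -/
/-- The Segre product of two tuples: all pairwise products, indexed by `Fin (n * m)`. -/
def segreProd {F : Type*} [Field F] {n m : ℕ} (x : Fin n → F) (y : Fin m → F) :
    Fin (n * m) → F :=
  fun k => x (finProdFinEquiv.symm k).1 * y (finProdFinEquiv.symm k).2

/-- A height on a field `F` with Archimedean error `e ≥ 0`: a function assigning to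
every nonempty tuple over `F` a value in `ℝ ∪ {-∞}`, satisfying: height of zero,
height of one, invariance under permutations, additivity for Segre products,
monotonicity under extending tuples, and the triangle inequality with error `e`. -/
def IsHeight {F : Type*} [Field F] (h : ∀ n : ℕ, (Fin n → F) → WithBot ℝ) (e : ℝ) : Prop :=
  0 ≤ e ∧
  (∀ n, 0 < n → ∀ x : Fin n → F, (h n x = ⊥ ↔ x = 0)) ∧
  h 2 ![1, 1] = 0 ∧
  (∀ n (σ : Equiv.Perm (Fin n)) (x : Fin n → F), h n (x ∘ σ) = h n x) ∧
  (∀ n m, 0 < n → 0 < m → ∀ (x : Fin n → F) (y : Fin m → F),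
    h (n * m) (segreProd x y) = h n x + h m y) ∧
  (∀ n m, 0 < n → 0 < m → ∀ (x : Fin n → F) (y : Fin m → F),
    h n x ≤ h (n + m) (Fin.append x y)) ∧
  (∀ n, 0 < n → ∀ x y : Fin n → F,
    h n (x + y) ≤ h (n + n) (Fin.append x y) + (e : WithBot ℝ))

namespace HeightInvarianceAux

/-- Two tuples whose lists are permutations of each other differ by a permutation
of the index set. -/
lemma exists_perm_comp {α : Type*} : ∀ {n : ℕ} (x y : Fin n → α),
    (List.ofFn x).Perm (List.ofFn y) → ∃ σ : Equiv.Perm (Fin n), x ∘ σ = y := by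
  intro n
  induction n with
  | zero =>
    intro x y _
    exact ⟨1, funext fun i => i.elim0⟩
  | succ n ih =>
    intro x y hp
    have hy0 : y 0 ∈ List.ofFn x := by
      refine hp.mem_iff.mpr ?_
      rw [List.mem_ofFn]
      exact ⟨0, rfl⟩
    rw [List.mem_ofFn] at hy0
    obtain ⟨i, hi⟩ := hy0
    set τ : Equiv.Perm (Fin (n + 1)) := Equiv.swap 0 i with hτ
    have hxτ0 : (x ∘ τ) 0 = y 0 := by
      simp only [Function.comp_apply, hτ, Equiv.swap_apply_left]
      exact hi
    have hperm : (List.ofFn (x ∘ τ)).Perm (List.ofFn y) :=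
      (τ.ofFn_comp_perm x).trans hp
    rw [List.ofFn_succ, List.ofFn_succ (f := y), hxτ0] at hperm
    have htail := hperm.cons_inv
    obtain ⟨σ', hσ'⟩ := ih (fun i => (x ∘ τ) i.succ) (fun i => y i.succ) htail
    refine ⟨(Equiv.Perm.decomposeFin.symm (0, σ')).trans τ, funext fun j => ?_⟩
    refine Fin.cases ?_ (fun j => ?_) j
    · simp only [Function.comp_apply, Equiv.trans_apply,
        Equiv.Perm.decomposeFin_symm_apply_zero]
      exact hxτ0
    · simp only [Function.comp_apply, Equiv.trans_apply,
        Equiv.Perm.decomposeFin_symm_apply_succ, Equiv.swap_self, Equiv.refl_apply]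
      exact congrFun hσ' j

variable {F : Type*} [Field F]

/-- A height evaluated on a multiset (via an arbitrary enumeration). -/
noncomputable def HH (h : ∀ n : ℕ, (Fin n → F) → WithBot ℝ) (s : Multiset F) : WithBot ℝ :=
  h s.toList.length s.toList.get

variable {h : ∀ n : ℕ, (Fin n → F) → WithBot ℝ} {e : ℝ}

lemma h_congr (hh : IsHeight h e) {n m : ℕ} {x : Fin n → F} {y : Fin m → F}
    (hxy : (List.ofFn x : Multiset F) = (List.ofFn y : Multiset F)) : h n x = h m y := by
  have hp : (List.ofFn x).Perm (List.ofFn y) := Multiset.coe_eq_coe.mp hxy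
  have hnm : n = m := by simpa using hp.length_eq
  subst hnm
  obtain ⟨σ, hσ⟩ := exists_perm_comp x y hp
  rw [← hσ]
  exact (hh.2.2.2.1 n σ x).symm

lemma h_eq_HH (hh : IsHeight h e) {n : ℕ} (x : Fin n → F) :
    h n x = HH h (List.ofFn x : Multiset F) := by
  refine h_congr hh ?_
  rw [List.ofFn_get, Multiset.coe_toList]

lemma HH_ne_bot (hh : IsHeight h e) {s : Multiset F} {a : F} (ha : a ∈ s) (ha0 : a ≠ 0) :
    HH h s ≠ ⊥ := by
  have hsne : s ≠ 0 := by
    rintro rfl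
    simp at ha
  have hlen : 0 < s.toList.length := by
    rw [List.length_pos_iff]
    exact fun hnil => hsne (Multiset.toList_eq_nil.mp hnil)
  intro hbot
  have := (hh.2.1 _ hlen _).mp hbot
  have ha' : a ∈ s.toList := Multiset.mem_toList.mpr ha
  obtain ⟨i, hi⟩ := List.mem_iff_get.mp ha'
  apply ha0
  rw [← hi, this]
  rfl

lemma HH_mono (hh : IsHeight h e) {s t : Multiset F} (hs : s ≠ 0) (hst : s ≤ t) :
    HH h s ≤ HH h t := by
  obtain ⟨r, rfl⟩ := Multiset.le_iff_exists_add.mp hst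
  rcases eq_or_ne r 0 with rfl | hr
  · rw [add_zero]
  · have hs' : 0 < s.toList.length := by
      rw [List.length_pos_iff]
      exact fun hnil => hs (Multiset.toList_eq_nil.mp hnil)
    have hr' : 0 < r.toList.length := by
      rw [List.length_pos_iff]
      exact fun hnil => hr (Multiset.toList_eq_nil.mp hnil)
    have key : HH h (s + r)
        = h (s.toList.length + r.toList.length) (Fin.append s.toList.get r.toList.get) := by
      rw [h_eq_HH hh (Fin.append s.toList.get r.toList.get)]
      congr 1
      rw [List.ofFn_fin_append, List.ofFn_get, List.ofFn_get, ← Multiset.coe_add,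
        Multiset.coe_toList, Multiset.coe_toList]
    rw [key]
    exact hh.2.2.2.2.2.1 _ _ hs' hr' _ _

lemma ofFn_segre_pair {N : ℕ} (a : Fin N → F) (μ : F) :
    (List.ofFn (segreProd a ![1, μ]) : Multiset F)
      = (List.ofFn a : Multiset F) + ((List.ofFn a : Multiset F)).map (· * μ) := by
  have h1 : (List.ofFn (segreProd a ![1, μ]) : Multiset F)
      = Multiset.map (segreProd a ![1, μ]) Finset.univ.val := (Fin.univ_val_map _).symm
  have h2 : Multiset.map (segreProd a ![1, μ]) Finset.univ.val
      = Multiset.map ((fun p : Fin N × Fin 2 => a p.1 * ![1, μ] p.2)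
          ∘ (finProdFinEquiv.symm : Fin (N * 2) → Fin N × Fin 2)) Finset.univ.val := rfl
  rw [h1, h2, ← Multiset.map_map, Multiset.map_univ_val_equiv]
  have h3 : (Finset.univ.val : Multiset (Fin N × Fin 2))
      = (Finset.univ.val : Multiset (Fin N)).bind
          (fun i => (Finset.univ.val : Multiset (Fin 2)).map (Prod.mk i)) := by
    rw [← Finset.univ_product_univ, Finset.product_val]
    rfl
  rw [h3, Multiset.map_bind]
  have h4 : ∀ i : Fin N,
      Multiset.map (fun p : Fin N × Fin 2 => a p.1 * ![1, μ] p.2)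
        (Multiset.map (Prod.mk i) (Finset.univ.val : Multiset (Fin 2)))
      = (a i * 1) ::ₘ {a i * μ} := by
    intro i
    rw [Multiset.map_map]
    have : ((fun p : Fin N × Fin 2 => a p.1 * ![1, μ] p.2) ∘ Prod.mk i)
        = fun j : Fin 2 => a i * ![1, μ] j := rfl
    rw [this, Fin.univ_val_map]
    have hl2 : List.ofFn (fun j : Fin 2 => a i * ![1, μ] j) = [a i * 1, a i * μ] := by
      simp only [List.ofFn_succ, List.ofFn_zero, Matrix.cons_val_zero, Matrix.cons_val_one,
        Matrix.head_cons, Fin.succ_zero_eq_one]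
    rw [hl2]
    rfl
  simp only [h4]
  rw [Multiset.bind_cons, Multiset.bind_singleton]
  congr 1
  · have : (fun i => a i * 1) = a := by funext i; rw [mul_one]
    rw [this, Fin.univ_val_map]
  · have : (fun i => a i * μ) = (· * μ) ∘ a := rfl
    rw [this, ← Multiset.map_map, Fin.univ_val_map]

lemma HH_segre2 (hh : IsHeight h e) {s : Multiset F} (hs : s ≠ 0) (μ : F) :
    HH h (s + s.map (· * μ)) = HH h s + h 2 ![1, μ] := by
  have hs' : 0 < s.toList.length := by
    rw [List.length_pos_iff]
    exact fun hnil => hs (Multiset.toList_eq_nil.mp hnil)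
  have hseg := hh.2.2.2.2.1 s.toList.length 2 hs' two_pos s.toList.get ![1, μ]
  rw [h_eq_HH hh (segreProd s.toList.get ![1, μ]), ofFn_segre_pair,
    List.ofFn_get, Multiset.coe_toList] at hseg
  rw [hseg]
  rfl

lemma HH_dup (hh : IsHeight h e) {s : Multiset F} (hs : s ≠ 0) :
    HH h (s + s) = HH h s := by
  have := HH_segre2 hh hs 1
  have hmap : s.map (· * (1 : F)) = s := by
    simp
  rw [hmap, hh.2.2.1, add_zero] at this
  exact this

lemma HH_cons_of_mem (hh : IsHeight h e) {s : Multiset F} {a : F} (ha : a ∈ s) :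
    HH h (a ::ₘ s) = HH h s := by
  have hs : s ≠ 0 := by
    rintro rfl
    simp at ha
  refine le_antisymm ?_ (HH_mono hh hs (Multiset.le_cons_self s a))
  have hle : a ::ₘ s ≤ s + s := by
    rw [← Multiset.singleton_add]
    exact add_le_add_left (Multiset.singleton_le.mpr ha) s
  have h1 : HH h (a ::ₘ s) ≤ HH h (s + s) := HH_mono hh (Multiset.cons_ne_zero) hle
  rw [HH_dup hh hs] at h1
  exact h1

lemma withbot_cancel {A c : WithBot ℝ} (hA : A ≠ ⊥) (heq : A = A + c) : c = 0 := by
  obtain ⟨r, rfl⟩ := WithBot.ne_bot_iff_exists.mp hA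
  induction c using WithBot.recBotCoe with
  | bot => rw [WithBot.add_bot] at heq; exact absurd heq (WithBot.coe_ne_bot)
  | coe c' =>
    rw [← WithBot.coe_add] at heq
    have : r = r + c' := WithBot.coe_injective heq
    have hc' : c' = 0 := by linarith
    rw [hc']
    rfl

lemma c_zero (hh : IsHeight h e) : h 2 ![(1 : F), 0] = 0 := by
  set s : Multiset F := {1, 0} with hsdef
  have hs : s ≠ 0 := Multiset.cons_ne_zero
  have h2 := HH_segre2 hh hs (0 : F)
  have hmap : s.map (· * (0 : F)) = (0 : F) ::ₘ {0} := by
    simp [hsdef]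
  rw [hmap] at h2
  have hAC : s + ((0 : F) ::ₘ {0}) = (0 : F) ::ₘ (0 : F) ::ₘ s := by
    rw [add_comm, Multiset.cons_add]
    congr 1
  rw [hAC] at h2
  have hmem1 : (0 : F) ∈ (0 : F) ::ₘ s := Multiset.mem_cons_self _ _
  have hmem2 : (0 : F) ∈ s := by simp [hsdef]
  rw [HH_cons_of_mem hh hmem1, HH_cons_of_mem hh hmem2] at h2
  have hne : HH h s ≠ ⊥ := HH_ne_bot hh (by simp [hsdef]) one_ne_zero
  exact withbot_cancel hne h2

lemma HH_zero_cons (hh : IsHeight h e) {s : Multiset F} (hs : s ≠ 0) :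
    HH h ((0 : F) ::ₘ s) = HH h s := by
  refine le_antisymm ?_ (HH_mono hh hs (Multiset.le_cons_self s 0))
  have h2 := HH_segre2 hh hs (0 : F)
  rw [c_zero hh, add_zero] at h2
  have hmem : (0 : F) ∈ s.map (· * (0 : F)) := by
    obtain ⟨a, ha⟩ := Multiset.exists_mem_of_ne_zero hs
    exact Multiset.mem_map.mpr ⟨a, ha, mul_zero a⟩
  have hle : (0 : F) ::ₘ s ≤ s + s.map (· * (0 : F)) := by
    have e1 : (0 : F) ::ₘ s = s + {0} := by rw [add_comm, Multiset.singleton_add]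
    rw [e1]
    exact add_le_add_right (Multiset.singleton_le.mpr hmem) s
  have h1 : HH h ((0 : F) ::ₘ s) ≤ HH h (s + s.map (· * (0 : F))) :=
    HH_mono hh Multiset.cons_ne_zero hle
  rw [h2] at h1
  exact h1

lemma c_root (hh : IsHeight h e) {lam : F} {k : ℕ} (hk : 0 < k) (hlk : lam ^ k = 1) :
    h 2 ![(1 : F), lam] = 0 := by
  haveI : NeZero k := ⟨hk.ne'⟩
  set u : Multiset F := (Finset.univ.val : Multiset (ZMod k)).map (fun j => lam ^ j.val)
    with hudef
  have h1u : (1 : F) ∈ u :=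
    Multiset.mem_map.mpr ⟨0, Finset.mem_univ_val _, by simp⟩
  have hu0 : u ≠ 0 := by
    rintro h0
    rw [h0] at h1u
    simp at h1u
  have hmap : u.map (· * lam) = u := by
    rw [hudef, Multiset.map_map]
    have hfun : ((· * lam) ∘ fun j : ZMod k => lam ^ j.val)
        = (fun j : ZMod k => lam ^ j.val) ∘ (Equiv.addRight (1 : ZMod k)) := by
      funext j
      simp only [Function.comp_apply, Equiv.coe_addRight]
      rw [← pow_succ]
      conv_lhs => rw [pow_eq_pow_mod _ hlk]
      congr 1
      rw [ZMod.val_add, ZMod.val_one_eq_one_mod, Nat.add_mod_mod]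
    rw [hfun, ← Multiset.map_map, Multiset.map_univ_val_equiv]
  have h2 := HH_segre2 hh hu0 lam
  rw [hmap, HH_dup hh hu0] at h2
  exact withbot_cancel (HH_ne_bot hh h1u one_ne_zero) h2

lemma HH_mul_le (hh : IsHeight h e) {lam : F} (hl : ∃ k : ℕ, 0 < k ∧ lam ^ k = 1)
    (a : F) (s : Multiset F) : HH h ((lam * a) ::ₘ s) ≤ HH h (a ::ₘ s) := by
  obtain ⟨k, hk, hlk⟩ := hl
  have h2 := HH_segre2 hh (Multiset.cons_ne_zero : a ::ₘ s ≠ 0) lam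
  rw [c_root hh hk hlk, add_zero] at h2
  have hle : (lam * a) ::ₘ s ≤ (a ::ₘ s) + (a ::ₘ s).map (· * lam) := by
    have e1 : (lam * a) ::ₘ s = {lam * a} + s := (Multiset.singleton_add _ _).symm
    rw [e1, add_comm ((a ::ₘ s)) _]
    exact add_le_add (Multiset.singleton_le.mpr
      (Multiset.mem_map.mpr ⟨a, Multiset.mem_cons_self _ _, mul_comm a lam⟩))
      (Multiset.le_cons_self _ _)
  have h1 : HH h ((lam * a) ::ₘ s) ≤ HH h ((a ::ₘ s) + (a ::ₘ s).map (· * lam)) :=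
    HH_mono hh Multiset.cons_ne_zero hle
  rw [h2] at h1
  exact h1

lemma HH_mul (hh : IsHeight h e) {lam : F} (hl : ∃ k : ℕ, 0 < k ∧ lam ^ k = 1)
    (a : F) (s : Multiset F) : HH h ((lam * a) ::ₘ s) = HH h (a ::ₘ s) := by
  obtain ⟨k, hk, hlk⟩ := hl
  refine le_antisymm (HH_mul_le hh ⟨k, hk, hlk⟩ a s) ?_
  have hl' : ∃ m : ℕ, 0 < m ∧ (lam ^ (k - 1)) ^ m = 1 :=
    ⟨k, hk, by rw [← pow_mul, mul_comm, pow_mul, hlk, one_pow]⟩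
  have key : lam ^ (k - 1) * (lam * a) = a := by
    rw [← mul_assoc, ← pow_succ, Nat.sub_add_cancel hk, hlk, one_mul]
  have := HH_mul_le hh hl' (lam * a) s
  rwa [key] at this

end HeightInvarianceAux

open HeightInvarianceAux in
/-- A height is invariant under duplication of a coordinate, addition of a zero
coordinate, and multiplication of a coordinate by a root of unity. -/
theorem height_invariance {F : Type*} [Field F]
    (h : ∀ n : ℕ, (Fin n → F) → WithBot ℝ) (e : ℝ) (hh : IsHeight h e)
    {n : ℕ} (ξ : Fin n → F) (x : F) (lam : F) (hl : ∃ k : ℕ, 0 < k ∧ lam ^ k = 1) :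
    h (n + 2) (Fin.append ξ ![x, x]) = h (n + 1) (Fin.append ξ ![x]) ∧
    h (n + 2) (Fin.append ξ ![x, 0]) = h (n + 1) (Fin.append ξ ![x]) ∧
    h (n + 1) (Fin.append ξ ![lam * x]) = h (n + 1) (Fin.append ξ ![x]) := by
  set S : Multiset F := (List.ofFn ξ : Multiset F) with hSdef
  have coe2 : ∀ a b : F, (List.ofFn (Fin.append ξ ![a, b]) : Multiset F)
      = a ::ₘ b ::ₘ S := by
    intro a b
    rw [List.ofFn_fin_append, ← Multiset.coe_add]
    have hofn : List.ofFn ![a, b] = [a, b] := by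
      simp only [List.ofFn_succ, List.ofFn_zero, Matrix.cons_val_zero, Matrix.cons_val_one,
        Matrix.head_cons, Fin.succ_zero_eq_one]
    rw [hofn]
    have hcoe : (([a, b] : List F) : Multiset F) = a ::ₘ b ::ₘ 0 := rfl
    rw [hcoe, add_comm, Multiset.cons_add, Multiset.cons_add, zero_add]
  have coe1 : ∀ a : F, (List.ofFn (Fin.append ξ ![a]) : Multiset F) = a ::ₘ S := by
    intro a
    rw [List.ofFn_fin_append, ← Multiset.coe_add]
    have hofn : List.ofFn ![a] = [a] := by
      simp only [List.ofFn_succ, List.ofFn_zero, Matrix.cons_val_zero]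
    rw [hofn]
    have hcoe : (([a] : List F) : Multiset F) = a ::ₘ 0 := rfl
    rw [hcoe, add_comm, Multiset.cons_add, zero_add]
  have e2 : ∀ a b : F, h (n + 2) (Fin.append ξ ![a, b]) = HH h (a ::ₘ b ::ₘ S) := by
    intro a b
    rw [h_eq_HH hh, coe2]
  have e1 : ∀ a : F, h (n + 1) (Fin.append ξ ![a]) = HH h (a ::ₘ S) := by
    intro a
    rw [h_eq_HH hh, coe1]
  refine ⟨?_, ?_, ?_⟩
  · rw [e2, e1]
    exact HH_cons_of_mem hh (Multiset.mem_cons_self x S)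
  · rw [e2, e1]
    rw [Multiset.cons_swap]
    exact HH_zero_cons hh Multiset.cons_ne_zero
  · rw [e1, e1]
    exact HH_mul hh hl x S
end

section
/- Let h be a height on a field F with Archimedean error e. Then for all integers n ≥ 1, m ≥ 1 and all tuples x₁,…,x_n ∈ F^m, one has h(x₁+⋯+x_n) ≤ h(x₁,…,x_n) + log₂(n)·e, where x₁+⋯+x_n denotes the coordinatewise sum and (x₁,…,x_n) the concatenation of the tuples. -/
set_option linter.unusedSectionVars false
set_option maxHeartbeats 1000000

namespace HeightAux

variable {F : Type*} [Field F] {h : ∀ n : ℕ, (Fin n → F) → WithBot ℝ} {e : ℝ}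

/-- Height on tuples indexed by an arbitrary fintype. -/
noncomputable def Hgen (h : ∀ n : ℕ, (Fin n → F) → WithBot ℝ) (α : Type*) [Fintype α]
    (x : α → F) : WithBot ℝ :=
  h (Fintype.card α) (x ∘ (Fintype.equivFin α).symm)

lemma reindex (hh : IsHeight h e) {a b : ℕ} (eab : Fin a ≃ Fin b) (x : Fin b → F) :
    h a (x ∘ eab) = h b x := by
  have hab : a = b := by
    have := Fintype.card_congr eab
    simpa using this
  subst hab
  exact hh.2.2.2.1 a eab x

lemma Hgen_reindex (hh : IsHeight h e) {α β : Type*} [Fintype α] [Fintype β]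
    (eab : α ≃ β) (x : β → F) : Hgen h α (x ∘ eab) = Hgen h β x := by
  unfold Hgen
  have : (x ∘ (Fintype.equivFin β).symm) ∘
      ((Fintype.equivFin α).symm.trans (eab.trans (Fintype.equivFin β))) =
      (x ∘ eab) ∘ (Fintype.equivFin α).symm := by
    funext i; simp
  rw [← this]
  exact reindex hh _ _

lemma Hgen_fin (hh : IsHeight h e) {q : ℕ} (x : Fin q → F) : Hgen h (Fin q) x = h q x := by
  unfold Hgen
  exact reindex hh ((Fintype.equivFin (Fin q)).symm) x

lemma Hgen_segre (hh : IsHeight h e) {α β : Type*} [Fintype α] [Fintype β]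
    [Nonempty α] [Nonempty β] (x : α → F) (y : β → F) :
    Hgen h (α × β) (fun p => x p.1 * y p.2) = Hgen h α x + Hgen h β y := by
  set a := Fintype.card α
  set b := Fintype.card β
  set x' : Fin a → F := x ∘ (Fintype.equivFin α).symm with hx'
  set y' : Fin b → F := y ∘ (Fintype.equivFin β).symm with hy'
  have e1 : Hgen h (Fin a × Fin b) (fun p => x' p.1 * y' p.2) =
      Hgen h (α × β) (fun p => x p.1 * y p.2) := by
    have := Hgen_reindex hh
      (Equiv.prodCongr (Fintype.equivFin α).symm (Fintype.equivFin β).symm)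
      (fun p : α × β => x p.1 * y p.2)
    convert this using 2
    funext p; rfl
  have e2 : Hgen h (Fin (a * b)) ((fun p : Fin a × Fin b => x' p.1 * y' p.2) ∘
      finProdFinEquiv.symm) = Hgen h (Fin a × Fin b) (fun p => x' p.1 * y' p.2) :=
    Hgen_reindex hh finProdFinEquiv.symm _
  have e3 : ((fun p : Fin a × Fin b => x' p.1 * y' p.2) ∘ finProdFinEquiv.symm) =
      segreProd x' y' := rfl
  have e4 : h (a * b) (segreProd x' y') = h a x' + h b y' :=
    hh.2.2.2.2.1 a b Fintype.card_pos Fintype.card_pos x' y'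
  rw [← e1, ← e2, e3, Hgen_fin hh, e4]
  rfl

lemma append_eq_elim {a b : ℕ} (x : Fin a → F) (y : Fin b → F) :
    Fin.append x y = (Sum.elim x y) ∘ finSumFinEquiv.symm := by
  funext i
  obtain ⟨j, rfl⟩ := finSumFinEquiv.surjective i
  cases j with
  | inl k => simp
  | inr k => simp

lemma Hgen_mono (hh : IsHeight h e) {α β : Type*} [Fintype α] [Fintype β]
    [Nonempty α] [Nonempty β] (x : α → F) (y : β → F) :
    Hgen h α x ≤ Hgen h (α ⊕ β) (Sum.elim x y) := by
  set a := Fintype.card α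
  set b := Fintype.card β
  set x' : Fin a → F := x ∘ (Fintype.equivFin α).symm with hx'
  set y' : Fin b → F := y ∘ (Fintype.equivFin β).symm with hy'
  have e1 : Hgen h (Fin a ⊕ Fin b) (Sum.elim x' y') = Hgen h (α ⊕ β) (Sum.elim x y) := by
    have := Hgen_reindex hh
      (Equiv.sumCongr (Fintype.equivFin α).symm (Fintype.equivFin β).symm)
      (Sum.elim x y)
    convert this using 2
    funext s; cases s <;> rfl
  have e2 : Hgen h (Fin (a + b)) ((Sum.elim x' y') ∘ finSumFinEquiv.symm) =
      Hgen h (Fin a ⊕ Fin b) (Sum.elim x' y') := Hgen_reindex hh finSumFinEquiv.symm _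
  have e4 : h a x' ≤ h (a + b) (Fin.append x' y') :=
    hh.2.2.2.2.2.1 a b Fintype.card_pos Fintype.card_pos x' y'
  rw [← e1, ← e2, Hgen_fin hh, ← append_eq_elim]
  exact e4

lemma Hgen_tri (hh : IsHeight h e) {α : Type*} [Fintype α] [Nonempty α] (x y : α → F) :
    Hgen h α (x + y) ≤ Hgen h (α ⊕ α) (Sum.elim x y) + (e : WithBot ℝ) := by
  set a := Fintype.card α
  set x' : Fin a → F := x ∘ (Fintype.equivFin α).symm with hx'
  set y' : Fin a → F := y ∘ (Fintype.equivFin α).symm with hy'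
  have e1 : Hgen h (Fin a ⊕ Fin a) (Sum.elim x' y') = Hgen h (α ⊕ α) (Sum.elim x y) := by
    have := Hgen_reindex hh
      (Equiv.sumCongr (Fintype.equivFin α).symm (Fintype.equivFin α).symm)
      (Sum.elim x y)
    convert this using 2
    funext s; cases s <;> rfl
  have e4 : h a (x' + y') ≤ h (a + a) (Fin.append x' y') + (e : WithBot ℝ) :=
    hh.2.2.2.2.2.2 a Fintype.card_pos x' y'
  have e2 : Hgen h (Fin (a + a)) ((Sum.elim x' y') ∘ finSumFinEquiv.symm) =
      Hgen h (Fin a ⊕ Fin a) (Sum.elim x' y') := Hgen_reindex hh finSumFinEquiv.symm _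
  have lhs : Hgen h α (x + y) = h a (x' + y') := rfl
  rw [lhs, ← e1, ← e2, ← append_eq_elim, Hgen_fin hh]
  exact e4

end HeightAux

namespace HeightAux

variable {F : Type*} [Field F] {h : ∀ n : ℕ, (Fin n → F) → WithBot ℝ} {e : ℝ}

lemma h_one (hh : IsHeight h e) : h 1 (fun _ => (1 : F)) = 0 := by
  set v : Fin 1 → F := fun _ => (1 : F) with hv
  have hs : segreProd v v = v := by
    funext k; simp [segreProd, v]
  have key := hh.2.2.2.2.1 1 1 one_pos one_pos v v
  rw [hs] at key
  have key2 : h 1 v = h 1 v + h 1 v := key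
  have hnb : h 1 v ≠ ⊥ := by
    intro hbot
    have hz := (hh.2.1 1 one_pos v).mp hbot
    have : (1 : F) = 0 := congrFun hz 0
    simp at this
  obtain ⟨r, hr⟩ := WithBot.ne_bot_iff_exists.mp hnb
  rw [← hr] at key2
  have : r = r + r := by exact_mod_cast key2
  have hr0 : r = 0 := by linarith
  rw [← hr, hr0]; rfl

lemma c_nonneg (hh : IsHeight h e) : 0 ≤ h 2 ![(1 : F), 0] := by
  have happ : Fin.append (m := 1) (n := 1) (fun _ => (1 : F)) (fun _ => (0 : F)) =
      ![(1 : F), 0] := by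
    funext i
    fin_cases i <;> rfl
  have key := hh.2.2.2.2.2.1 1 1 one_pos one_pos (fun _ => (1 : F)) (fun _ => (0 : F))
  rw [h_one hh] at key
  have key2 : (0 : WithBot ℝ) ≤ h 2 (Fin.append (m := 1) (n := 1)
      (fun _ => (1 : F)) (fun _ => (0 : F))) := key
  rwa [happ] at key2

/-- `α ⊕ α ≃ α × Fin 2`. -/
def pairEquiv (α : Type*) : α ⊕ α ≃ α × Fin 2 where
  toFun := Sum.elim (fun a => (a, 0)) (fun a => (a, 1))
  invFun := fun p => if p.2 = 0 then Sum.inl p.1 else Sum.inr p.1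
  left_inv := by rintro (a | a) <;> simp
  right_inv := by
    rintro ⟨a, j⟩
    fin_cases j <;> simp

lemma Hgen_zeropad (hh : IsHeight h e) {α : Type*} [Fintype α] [Nonempty α] (x : α → F) :
    Hgen h (α ⊕ α) (Sum.elim x 0) = Hgen h α x + h 2 ![(1 : F), 0] := by
  have hcomp : (fun p : α × Fin 2 => x p.1 * (![(1 : F), 0]) p.2) ∘ (pairEquiv α) =
      Sum.elim x 0 := by
    funext s
    rcases s with a | a <;> simp [pairEquiv]
  have h1 := Hgen_reindex hh (pairEquiv α) (fun p : α × Fin 2 => x p.1 * (![(1 : F), 0]) p.2)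
  rw [hcomp] at h1
  rw [h1, Hgen_segre hh, Hgen_fin hh]

lemma Hgen_bot_iff (hh : IsHeight h e) {α : Type*} [Fintype α] [Nonempty α] (x : α → F) :
    Hgen h α x = ⊥ ↔ x = 0 := by
  unfold Hgen
  rw [hh.2.1 _ Fintype.card_pos]
  constructor
  · intro hz
    funext a
    have := congrFun hz (Fintype.equivFin α a)
    simpa using this
  · intro hz; rw [hz]; rfl

/-- `α ≃ Fin (2^0) × α`. -/
def powZeroEquiv (α : Type*) : α ≃ Fin (2 ^ 0) × α where
  toFun := fun a => (0, a)
  invFun := fun p => p.2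
  left_inv := fun a => rfl
  right_inv := by
    rintro ⟨j, a⟩
    have hj : j = 0 := by
      have := j.isLt
      have h1 : (2 : ℕ) ^ 0 = 1 := rfl
      exact Fin.ext (by omega)
    rw [hj]

lemma Hgen_pow2 (hh : IsHeight h e) (k : ℕ) {α : Type*} [Fintype α] [Nonempty α]
    (x : Fin (2 ^ k) → α → F) :
    Hgen h α (∑ i, x i) ≤
      Hgen h (Fin (2 ^ k) × α) (fun p => x p.1 p.2) + ((k * e : ℝ) : WithBot ℝ) := by
  classical
  induction k generalizing α with
  | zero =>
    have hsum : (∑ i, x i) = x 0 := by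
      have : (Finset.univ : Finset (Fin (2 ^ 0))) = {0} := by
        apply Finset.eq_singleton_iff_unique_mem.mpr
        refine ⟨Finset.mem_univ _, fun y _ => ?_⟩
        have := y.isLt
        have h1 : (2 : ℕ) ^ 0 = 1 := rfl
        exact Fin.ext (by omega)
      rw [this, Finset.sum_singleton]
    have h1 := Hgen_reindex hh (powZeroEquiv α) (fun p : Fin (2 ^ 0) × α => x p.1 p.2)
    have hcomp : (fun p : Fin (2 ^ 0) × α => x p.1 p.2) ∘ (powZeroEquiv α) = x 0 := rfl
    rw [hcomp] at h1
    rw [hsum, ← h1]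
    simp
  | succ k ih =>
    have hpow : (2 : ℕ) ^ (k + 1) = 2 ^ k + 2 ^ k := by ring
    set e2 : Fin (2 ^ (k + 1)) ≃ Fin (2 ^ k) ⊕ Fin (2 ^ k) :=
      (finCongr hpow).trans finSumFinEquiv.symm with he2
    set u : Fin (2 ^ k) → α → F := fun j => x (e2.symm (Sum.inl j)) with hu
    set v : Fin (2 ^ k) → α → F := fun j => x (e2.symm (Sum.inr j)) with hv
    have hsum : (∑ i, x i) = (∑ j, u j) + (∑ j, v j) := by
      rw [← Fintype.sum_equiv e2.symm (fun s => x (e2.symm s)) x (fun s => rfl)]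
      rw [Fintype.sum_sum_type]
    have hsum2 : (∑ j, u j) + (∑ j, v j) = ∑ j, (u j + v j) := by
      rw [Finset.sum_add_distrib]
    have step1 := ih (fun j => u j + v j)
    have step2 := Hgen_tri hh (α := Fin (2 ^ k) × α)
      (fun p => u p.1 p.2) (fun p => v p.1 p.2)
    have hfuneq : (fun p : Fin (2 ^ k) × α => (u p.1 + v p.1) p.2) =
        (fun p : Fin (2 ^ k) × α => u p.1 p.2) + (fun p => v p.1 p.2) := rfl
    set E3 : Fin (2 ^ (k + 1)) × α ≃ (Fin (2 ^ k) × α) ⊕ (Fin (2 ^ k) × α) :=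
      (Equiv.prodCongr e2 (Equiv.refl α)).trans (Equiv.sumProdDistrib _ _ α) with hE3
    have hcomp3 : (Sum.elim (fun p : Fin (2 ^ k) × α => u p.1 p.2)
        (fun p : Fin (2 ^ k) × α => v p.1 p.2)) ∘ E3 =
        (fun p : Fin (2 ^ (k + 1)) × α => x p.1 p.2) := by
      funext p
      rcases p with ⟨i, a⟩
      rcases hs : e2 i with j | j
      · have hi : e2.symm (Sum.inl j) = i := by rw [← hs]; simp
        simp [hE3, hs]
        simp only [hu]
        rw [hi]
      · have hi : e2.symm (Sum.inr j) = i := by rw [← hs]; simp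
        simp [hE3, hs]
        simp only [hv]
        rw [hi]
    have h4 := Hgen_reindex hh E3 (Sum.elim (fun p : Fin (2 ^ k) × α => u p.1 p.2)
        (fun p : Fin (2 ^ k) × α => v p.1 p.2))
    rw [hcomp3] at h4
    have hcast : (e : WithBot ℝ) + ((k * e : ℝ) : WithBot ℝ) =
        (((k + 1 : ℕ) * e : ℝ) : WithBot ℝ) := by
      rw [← WithBot.coe_add]
      congr 1
      push_cast
      ring
    calc Hgen h α (∑ i, x i) = Hgen h α (∑ j, (u j + v j)) := by rw [hsum, hsum2]
      _ ≤ Hgen h (Fin (2 ^ k) × α) (fun p => (u p.1 + v p.1) p.2) + ((k * e : ℝ) : WithBot ℝ) :=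
          step1
      _ ≤ (Hgen h ((Fin (2 ^ k) × α) ⊕ (Fin (2 ^ k) × α))
            (Sum.elim (fun p => u p.1 p.2) (fun p => v p.1 p.2)) + (e : WithBot ℝ))
          + ((k * e : ℝ) : WithBot ℝ) := by
          rw [hfuneq]
          exact add_le_add_left step2 _
      _ = Hgen h (Fin (2 ^ (k + 1)) × α) (fun p => x p.1 p.2) +
            (((k + 1 : ℕ) * e : ℝ) : WithBot ℝ) := by
          rw [h4, add_assoc, hcast]

end HeightAux

namespace HeightAux

variable {F : Type*} [Field F] {h : ∀ n : ℕ, (Fin n → F) → WithBot ℝ} {e : ℝ}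

lemma Hgen_empty_pow (hh : IsHeight h e) {α : Type*} [Fintype α] :
    Hgen h (Fin 0 → α) (fun _ => (1 : F)) = 0 := by
  have E : Fin 1 ≃ (Fin 0 → α) :=
    { toFun := fun _ => Fin.elim0
      invFun := fun _ => 0
      left_inv := fun i => Subsingleton.elim _ _
      right_inv := fun f => funext fun i => i.elim0 }
  have h1 := Hgen_reindex hh E (fun _ : Fin 0 → α => (1 : F))
  have hcomp : (fun _ : Fin 0 → α => (1 : F)) ∘ E = fun _ : Fin 1 => (1 : F) := rfl
  rw [hcomp] at h1
  rw [← h1, Hgen_fin hh, h_one hh]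

lemma Hgen_pow (hh : IsHeight h e) {α : Type*} [Fintype α] [Nonempty α] (x : α → F) :
    ∀ N : ℕ, Hgen h (Fin N → α) (fun j => ∏ k, x (j k)) = N • Hgen h α x := by
  classical
  intro N
  induction N with
  | zero =>
    rw [zero_nsmul]
    have : (fun j : Fin 0 → α => ∏ k, x (j k)) = fun _ => (1 : F) := by
      funext j; simp
    rw [this, Hgen_empty_pow hh]
  | succ N ih =>
    set E : α × (Fin N → α) ≃ (Fin (N + 1) → α) := Fin.consEquiv (fun _ => α) with hE
    have hcomp : (fun j : Fin (N + 1) → α => ∏ k, x (j k)) ∘ E =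
        fun q : α × (Fin N → α) => x q.1 * ∏ k, x (q.2 k) := by
      funext q
      simp only [Function.comp_apply, hE, Fin.consEquiv_apply]
      rw [Fin.prod_univ_succ]
      simp
    have h1 := Hgen_reindex hh E (fun j : Fin (N + 1) → α => ∏ k, x (j k))
    rw [hcomp] at h1
    have hseg := Hgen_segre hh (α := α) (β := Fin N → α) x (fun f => ∏ k, x (f k))
    rw [← h1, hseg, ih, succ_nsmul, add_comm]

lemma pairEquivFin {M R : ℕ} (hMR : M + R = 2 ^ (Nat.clog 2 M)) : True := trivial

lemma Hgen_sum_general (hh : IsHeight h e) {ι α : Type*} [Fintype ι] [Nonempty ι]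
    [Fintype α] [Nonempty α] (x : ι → α → F) :
    Hgen h α (∑ i, x i) ≤ Hgen h (ι × α) (fun p => x p.1 p.2) +
      (h 2 ![(1 : F), 0] + ((Nat.clog 2 (Fintype.card ι) * e : ℝ) : WithBot ℝ)) := by
  classical
  set M := Fintype.card ι with hM
  have hM1 : 1 ≤ M := Fintype.card_pos
  set k := Nat.clog 2 M with hk
  have hMle : M ≤ 2 ^ k := Nat.le_pow_clog (by norm_num) M
  set R := 2 ^ k - M with hR
  have hMR : M + R = 2 ^ k := by omega
  set eι : ι ≃ Fin M := Fintype.equivFin ι with heι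
  set x0 : Fin M → α → F := fun j => x (eι.symm j) with hx0
  set eSplit : Fin (2 ^ k) ≃ Fin M ⊕ Fin R :=
    (finCongr hMR.symm).trans finSumFinEquiv.symm with heSplit
  set x' : Fin (2 ^ k) → α → F := fun i => Sum.elim x0 0 (eSplit i) with hx'
  have hsum : (∑ i, x' i) = ∑ i, x i := by
    rw [show (∑ i, x' i) = ∑ s, Sum.elim x0 0 s from
      Fintype.sum_equiv eSplit _ _ (fun i => rfl)]
    rw [Fintype.sum_sum_type]
    simp only [Sum.elim_inl, Sum.elim_inr, Pi.zero_apply]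
    rw [show (∑ j, x0 j) = ∑ i, x i from Fintype.sum_equiv eι.symm _ _ (fun j => rfl)]
    simp
  -- step 1: power of two bound
  have step1 := Hgen_pow2 hh k x'
  -- step 2: reindex Fin (2^k) × α to (Fin M × α) ⊕ (Fin R × α)
  set E2 : Fin (2 ^ k) × α ≃ (Fin M × α) ⊕ (Fin R × α) :=
    (Equiv.prodCongr eSplit (Equiv.refl α)).trans (Equiv.sumProdDistrib _ _ α) with hE2
  have hcomp2 : (Sum.elim (fun p : Fin M × α => x0 p.1 p.2) 0) ∘ E2 =
      (fun p : Fin (2 ^ k) × α => x' p.1 p.2) := by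
    funext p
    rcases p with ⟨i, a⟩
    rcases hs : eSplit i with j | j
    · simp [hE2, hs, hx']
    · simp [hE2, hs, hx']
  have h2 := Hgen_reindex hh E2 (Sum.elim (fun p : Fin M × α => x0 p.1 p.2) 0)
  rw [hcomp2] at h2
  -- step 3: the padded height is at most the unpadded plus c
  have step3 : Hgen h ((Fin M × α) ⊕ (Fin R × α))
      (Sum.elim (fun p : Fin M × α => x0 p.1 p.2) 0) ≤
      Hgen h (Fin M × α) (fun p : Fin M × α => x0 p.1 p.2) + h 2 ![(1 : F), 0] := by
    rcases Nat.eq_zero_or_pos R with hR0 | hRpos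
    · -- R = 0 : the Fin R part is empty
      have : IsEmpty (Fin R) := by rw [hR0]; exact Fin.isEmpty'
      set E0 : (Fin M × α) ≃ (Fin M × α) ⊕ (Fin R × α) :=
        (Equiv.sumEmpty (Fin M × α) (Fin R × α)).symm with hE0
      have hcomp0 : (Sum.elim (fun p : Fin M × α => x0 p.1 p.2) 0) ∘ E0 =
          (fun p : Fin M × α => x0 p.1 p.2) := by
        funext p; simp [hE0]
      have h0 := Hgen_reindex hh E0 (Sum.elim (fun p : Fin M × α => x0 p.1 p.2) 0)
      rw [hcomp0] at h0
      rw [← h0]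
      exact le_add_of_nonneg_right (c_nonneg hh)
    · -- R > 0 : extend the zero block to size M, then use zeropad
      have hdespite : Nonempty (Fin R) := ⟨⟨0, hRpos⟩⟩
      have hM2 : 2 ≤ M := by
        rcases Nat.lt_or_ge M 2 with hc | hc
        · exfalso
          have hMeq : M = 1 := by omega
          have hk0 : k = 0 := by rw [hk, hMeq, Nat.clog_one_right]
          have hR0' : R = 0 := by rw [hR, hk0, hMeq]; norm_num
          omega
        · exact hc
      have hklb : 2 ^ (k - 1) < M := by
        have := Nat.pow_pred_clog_lt_self (b := 2) (by norm_num) (x := M) (by omega)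
        exact this
      have hk1 : 1 ≤ k := by
        by_contra hc
        have : k = 0 := by omega
        rw [this] at hMle
        omega
      have hpow2 : 2 ^ k = 2 * 2 ^ (k - 1) := by
        rw [← pow_succ']
        congr 1
        omega
      have hRM : R < M := by omega
      set D := M - R with hD
      have hDpos : 0 < D := by omega
      have hDne : Nonempty (Fin D) := ⟨⟨0, hDpos⟩⟩
      have hRD : R + D = M := by omega
      -- mono step
      have mono := Hgen_mono hh (α := (Fin M × α) ⊕ (Fin R × α)) (β := Fin D × α)
        (Sum.elim (fun p : Fin M × α => x0 p.1 p.2) 0) 0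
      -- reindex ((Fin M × α) ⊕ (Fin R × α)) ⊕ (Fin D × α) ≃ (Fin M × α) ⊕ (Fin M × α)
      set e4 : (Fin R × α) ⊕ (Fin D × α) ≃ Fin M × α :=
        ((Equiv.sumProdDistrib _ _ α).symm.trans
          (Equiv.prodCongr (finSumFinEquiv.trans (finCongr hRD)) (Equiv.refl α))) with he4
      set E5 : ((Fin M × α) ⊕ (Fin R × α)) ⊕ (Fin D × α) ≃ (Fin M × α) ⊕ (Fin M × α) :=
        (Equiv.sumAssoc _ _ _).trans (Equiv.sumCongr (Equiv.refl _) e4) with hE5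
      have hcomp5 : (Sum.elim (fun p : Fin M × α => x0 p.1 p.2) 0) ∘ E5 =
          Sum.elim (Sum.elim (fun p : Fin M × α => x0 p.1 p.2) 0) 0 := by
        funext s
        rcases s with (p | p) | p
        · simp [hE5]
        · simp [hE5, he4]
        · simp [hE5, he4]
      have h5 := Hgen_reindex hh E5 (Sum.elim (fun p : Fin M × α => x0 p.1 p.2) 0)
      rw [hcomp5] at h5
      calc Hgen h ((Fin M × α) ⊕ (Fin R × α)) (Sum.elim (fun p : Fin M × α => x0 p.1 p.2) 0)
          ≤ Hgen h (((Fin M × α) ⊕ (Fin R × α)) ⊕ (Fin D × α))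
            (Sum.elim (Sum.elim (fun p : Fin M × α => x0 p.1 p.2) 0) 0) := mono
        _ = Hgen h ((Fin M × α) ⊕ (Fin M × α))
            (Sum.elim (fun p : Fin M × α => x0 p.1 p.2) 0) := h5
        _ = Hgen h (Fin M × α) (fun p : Fin M × α => x0 p.1 p.2) + h 2 ![(1 : F), 0] :=
            Hgen_zeropad hh _
  -- step 4: identify Hgen (Fin M × α) with Hgen (ι × α)
  have h6 := Hgen_reindex hh (Equiv.prodCongr eι.symm (Equiv.refl α))
    (fun p : ι × α => x p.1 p.2)
  have hcomp6 : (fun p : ι × α => x p.1 p.2) ∘ (Equiv.prodCongr eι.symm (Equiv.refl α)) =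
      (fun p : Fin M × α => x0 p.1 p.2) := rfl
  rw [hcomp6] at h6
  -- combine
  calc Hgen h α (∑ i, x i) = Hgen h α (∑ i, x' i) := by rw [hsum]
    _ ≤ Hgen h (Fin (2 ^ k) × α) (fun p => x' p.1 p.2) + ((k * e : ℝ) : WithBot ℝ) := step1
    _ = Hgen h ((Fin M × α) ⊕ (Fin R × α)) (Sum.elim (fun p : Fin M × α => x0 p.1 p.2) 0)
          + ((k * e : ℝ) : WithBot ℝ) := by rw [h2]
    _ ≤ (Hgen h (Fin M × α) (fun p : Fin M × α => x0 p.1 p.2) + h 2 ![(1 : F), 0])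
          + ((k * e : ℝ) : WithBot ℝ) := add_le_add_left step3 _
    _ = Hgen h (ι × α) (fun p => x p.1 p.2) +
          (h 2 ![(1 : F), 0] + ((k * e : ℝ) : WithBot ℝ)) := by rw [h6, add_assoc]

end HeightAux

namespace HeightAux

variable {F : Type*} [Field F] {h : ∀ n : ℕ, (Fin n → F) → WithBot ℝ} {e : ℝ}

lemma coe_nsmul_real (r : ℝ) (N : ℕ) :
    (N • ((r : WithBot ℝ))) = ((N * r : ℝ) : WithBot ℝ) := by
  induction N with
  | zero => simp
  | succ N ih =>
    rw [succ_nsmul, ih, ← WithBot.coe_add]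
    congr 1
    push_cast
    ring

lemma clog_le_logb (n N : ℕ) (hn : 1 ≤ n) :
    (Nat.clog 2 (n ^ N) : ℝ) ≤ N * Real.logb 2 n + 1 := by
  have hL : 0 ≤ Real.logb 2 (n : ℝ) := Real.logb_nonneg (by norm_num) (by exact_mod_cast hn)
  set k := Nat.clog 2 (n ^ N) with hkdef
  rcases Nat.eq_zero_or_pos k with hk0 | hkpos
  · rw [hk0]
    have : 0 ≤ (N : ℝ) * Real.logb 2 n := mul_nonneg (Nat.cast_nonneg N) hL
    push_cast
    linarith
  · have hn1 : 1 < n ^ N := by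
      rcases Nat.lt_or_ge (n ^ N) 2 with hc | hc
      · exfalso
        have h1 : 1 ≤ n ^ N := Nat.one_le_pow _ _ (by omega)
        have : n ^ N = 1 := by omega
        rw [hkdef, this, Nat.clog_one_right] at hkpos
        omega
      · omega
    have hlt : 2 ^ (k - 1) < n ^ N := Nat.pow_pred_clog_lt_self (by norm_num) hn1
    have hltR : (2 : ℝ) ^ (k - 1) < (n : ℝ) ^ N := by exact_mod_cast hlt
    have hlog := Real.logb_lt_logb (b := 2) (by norm_num) (by positivity) hltR
    rw [Real.logb_pow, Real.logb_pow] at hlog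
    have h22 : Real.logb 2 2 = 1 := by
      simp [Real.logb_self_eq_one]
    rw [h22, mul_one] at hlog
    have hcast : ((k - 1 : ℕ) : ℝ) = (k : ℝ) - 1 := by
      rw [Nat.cast_sub hkpos]
      simp
    rw [hcast] at hlog
    linarith

end HeightAux


open HeightAux

/-- Generalized triangle inequality: for tuples `x₁,…,x_n ∈ F^m`,
`h(x₁+⋯+x_n) ≤ h(x₁,…,x_n) + log₂(n)·e`, where `(x₁,…,x_n)` is the concatenation
(a tuple of length `n·m`). -/
theorem height_generalized_triangle_inequality {F : Type*} [Field F]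
    (h : ∀ n : ℕ, (Fin n → F) → WithBot ℝ) (e : ℝ) (hh : IsHeight h e)
    (n m : ℕ) (hn : 0 < n) (hm : 0 < m) (x : Fin n → Fin m → F) :
    h m (∑ i, x i) ≤
      h (n * m) (fun k => x (finProdFinEquiv.symm k).1 (finProdFinEquiv.symm k).2) +
        ((Real.logb 2 n * e : ℝ) : WithBot ℝ) := by
  classical
  haveI : Nonempty (Fin n) := ⟨⟨0, hn⟩⟩
  haveI : Nonempty (Fin m) := ⟨⟨0, hm⟩⟩
  set s : Fin m → F := ∑ i, x i with hs
  set X : Fin (n * m) → F :=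
    fun k => x (finProdFinEquiv.symm k).1 (finProdFinEquiv.symm k).2 with hX
  by_cases hsbot : h m s = ⊥
  · rw [hsbot]; exact bot_le
  obtain ⟨a, ha⟩ := WithBot.ne_bot_iff_exists.mp hsbot
  have hXH : h (n * m) X = Hgen h (Fin n × Fin m) (fun p => x p.1 p.2) := by
    have h1 := Hgen_reindex hh (finProdFinEquiv.symm : Fin (n * m) ≃ Fin n × Fin m)
      (fun p : Fin n × Fin m => x p.1 p.2)
    have hcomp : (fun p : Fin n × Fin m => x p.1 p.2) ∘
        (finProdFinEquiv.symm : Fin (n * m) ≃ Fin n × Fin m) = X := rfl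
    rw [hcomp] at h1
    rw [← Hgen_fin hh X, h1]
  have hXbot : h (n * m) X ≠ ⊥ := by
    intro hbt
    have hz : X = 0 := (hh.2.1 (n * m) (by positivity) X).mp hbt
    have hx0 : ∀ i j, x i j = 0 := by
      intro i j
      have h0 := congrFun hz (finProdFinEquiv (i, j))
      have hxe : X (finProdFinEquiv (i, j)) = x i j := by
        rw [hX]
        simp only [Equiv.symm_apply_apply]
      rw [hxe] at h0
      simpa using h0
    have hs0 : s = 0 := by
      funext j
      rw [hs, Finset.sum_apply]
      simp [hx0]
    exact hsbot (by rw [hs0]; exact (hh.2.1 m hm 0).mpr rfl)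
  obtain ⟨b, hb⟩ := WithBot.ne_bot_iff_exists.mp hXbot
  have hcne : h 2 ![(1 : F), 0] ≠ ⊥ := by
    intro hbt
    have := (hh.2.1 2 (by norm_num) ![(1 : F), 0]).mp hbt
    have h10 : (1 : F) = 0 := by
      have := congrFun this 0
      simpa using this
    simp at h10
  obtain ⟨c₀, hc₀⟩ := WithBot.ne_bot_iff_exists.mp hcne
  have hc0nn : 0 ≤ c₀ := by
    have := c_nonneg hh (F := F)
    rw [← hc₀] at this
    exact_mod_cast this
  have key : ∀ N : ℕ, (N : ℝ) * a ≤ N * b + c₀ + (Nat.clog 2 (n ^ N) : ℝ) * e := by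
    intro N
    set T : (Fin N → Fin n) → (Fin N → Fin m) → F :=
      fun I j => ∏ k, x (I k) (j k) with hT
    have hcard : Fintype.card (Fin N → Fin n) = n ^ N := by
      simp [Fintype.card_fun]
    have main := Hgen_sum_general hh (ι := Fin N → Fin n) (α := Fin N → Fin m) T
    rw [hcard] at main
    -- LHS : sum of the tensor family is the tensor power of s
    have hsumT : (∑ I, T I) = fun j : Fin N → Fin m => ∏ k, s (j k) := by
      funext j
      rw [Finset.sum_apply]
      have := Finset.prod_univ_sum (fun _ : Fin N => (Finset.univ : Finset (Fin n)))
        (fun k i => x i (j k))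
      rw [Fintype.piFinset_univ] at this
      rw [hT]
      simp only
      rw [← this]
      congr 1
      funext k
      rw [hs, Finset.sum_apply]
    have hpowS := Hgen_pow hh (α := Fin m) s N
    rw [Hgen_fin hh] at hpowS
    -- RHS : reindex to the tensor power of (uncurried) x
    set E : (Fin N → Fin n) × (Fin N → Fin m) ≃ (Fin N → Fin n × Fin m) :=
      (Equiv.arrowProdEquivProdArrow (Fin N) (fun _ => Fin n) (fun _ => Fin m)).symm with hE
    have hcompE : (fun J : Fin N → Fin n × Fin m =>
        ∏ k, (fun p : Fin n × Fin m => x p.1 p.2) (J k)) ∘ E =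
        (fun q : (Fin N → Fin n) × (Fin N → Fin m) => T q.1 q.2) := by
      funext q
      simp [hE, Equiv.arrowProdEquivProdArrow, hT]
    have hEre := Hgen_reindex hh E
      (fun J : Fin N → Fin n × Fin m => ∏ k, (fun p : Fin n × Fin m => x p.1 p.2) (J k))
    rw [hcompE] at hEre
    have hpowX := Hgen_pow hh (α := Fin n × Fin m) (fun p => x p.1 p.2) N
    rw [← hXH] at hpowX
    -- combine
    rw [hsumT] at main
    rw [hpowS] at main
    have hEre' : (Hgen h ((Fin N → Fin n) × (Fin N → Fin m)) fun q => T q.1 q.2) =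
        Hgen h (Fin N → Fin n × Fin m) (fun J => ∏ k, x (J k).1 (J k).2) := hEre
    rw [hEre', hpowX] at main
    rw [← ha, ← hb, ← hc₀] at main
    rw [coe_nsmul_real, coe_nsmul_real] at main
    have : ((N * a : ℝ) : WithBot ℝ) ≤
        ((N * b + (c₀ + (Nat.clog 2 (n ^ N) : ℝ) * e) : ℝ) : WithBot ℝ) := by
      rw [WithBot.coe_add, WithBot.coe_add]
      exact main
    have hreal := WithBot.coe_le_coe.mp this
    linarith
  -- the limit argument
  have hL : 0 ≤ Real.logb 2 (n : ℝ) := Real.logb_nonneg (by norm_num)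
    (by exact_mod_cast hn)
  have he0 : 0 ≤ e := hh.1
  have bound : ∀ N : ℕ, 1 ≤ N → a ≤ b + Real.logb 2 n * e + (c₀ + e) / N := by
    intro N hN
    have hNpos : (0 : ℝ) < N := by exact_mod_cast hN
    have hclog := clog_le_logb n N hn
    have hclog' : (Nat.clog 2 (n ^ N) : ℝ) * e ≤ ((N : ℝ) * Real.logb 2 n + 1) * e :=
      mul_le_mul_of_nonneg_right hclog he0
    have hkey := key N
    have h1 : (a - (b + Real.logb 2 n * e)) * N ≤ c₀ + e := by nlinarith
    have h2 : a - (b + Real.logb 2 n * e) ≤ (c₀ + e) / N := (le_div_iff₀ hNpos).mpr h1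
    linarith
  have htend : Filter.Tendsto (fun N : ℕ => b + Real.logb 2 n * e + (c₀ + e) / N)
      Filter.atTop (nhds (b + Real.logb 2 n * e)) := by
    have h0 := tendsto_const_div_atTop_nhds_zero_nat (c₀ + e)
    have := Filter.Tendsto.add
      (tendsto_const_nhds (x := b + Real.logb 2 n * e) (f := Filter.atTop (α := ℕ))) h0
    simpa using this
  have hfinal : a ≤ b + Real.logb 2 n * e :=
    ge_of_tendsto htend (Filter.eventually_atTop.mpr ⟨1, fun N hN => bound N hN⟩)
  rw [← ha, ← hb]
  calc ((a : ℝ) : WithBot ℝ) ≤ ((b + Real.logb 2 n * e : ℝ) : WithBot ℝ) :=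
        WithBot.coe_le_coe.mpr hfinal
    _ = (b : WithBot ℝ) + ((Real.logb 2 n * e : ℝ) : WithBot ℝ) := by
        rw [← WithBot.coe_add]
end

section
/- Let K be a number field and let Pl(K) denote the set of places of K (equivalence classes of nontrivial absolute values on K), with each place v carrying the standard normalized absolute value |·|_v (for a finite place v over a prime ideal p, |a|_v = N(p)^{-ord_p(a)}; for a real place, the usual real absolute value under the corresponding embedding; for a complex place, the square of the complex modulus), so that the product formula ∏_{v ∈ Pl(K)} |a|_v = 1 holds for every a ∈ K×. If w : Pl(K) → ℝ_{≥0} is a function such that ∑_{v ∈ Pl(K)} w(v)·log|a|_v = 0 for every a ∈ K× (the sum having only finitely many nonzero terms), then w is constant. -/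
open NumberField IsDedekindDomain

/-- The logarithm of the standard normalized absolute value at a finite place `v` of a
number field `K`: `log |a|_v = -ord_v(a) · log N(v)`, where `N(v)` is the absolute norm
of the prime ideal (and `log |0|_v` is junk `0`). -/
noncomputable def finPlaceLog {K : Type*} [Field K] [NumberField K]
    (v : HeightOneSpectrum (𝓞 K)) (a : K) : ℝ :=
  if h : v.valuation K a = 0 then 0
  else ((Multiplicative.toAdd (WithZero.unzero h) : ℤ) : ℝ) *
    Real.log (Ideal.absNorm v.asIdeal)

/-- The logarithm of the standard normalized absolute value at a place of a number
field `K`: at a finite place over `p`, `|a|_v = N(p)^{-ord_p a}`; at an infinite place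
`i`, it is `(i a)^{mult i}` (the usual absolute value at a real place, the square of the
modulus at a complex place). -/
noncomputable def placeLog {K : Type*} [Field K] [NumberField K]
    (p : HeightOneSpectrum (𝓞 K) ⊕ InfinitePlace K) (a : K) : ℝ :=
  Sum.elim (fun v => finPlaceLog v a) (fun i => (i.mult : ℝ) * Real.log (i a)) p

namespace WeightsAux

open IsDedekindDomain.HeightOneSpectrum Function Set

variable {K : Type*} [Field K] [NumberField K]

lemma finPlaceLog_eq {v : HeightOneSpectrum (𝓞 K)} {a : K} (n : ℤ)
    (h : v.valuation K a = ((Multiplicative.ofAdd n : Multiplicative ℤ) : WithZero (Multiplicative ℤ))) :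
    finPlaceLog v a = (n : ℝ) * Real.log (Ideal.absNorm v.asIdeal) := by
  have hne : v.valuation K a ≠ 0 := by rw [h]; exact WithZero.coe_ne_zero
  rw [finPlaceLog, dif_neg hne]
  congr 2
  have h1 : WithZero.unzero hne = Multiplicative.ofAdd n :=
    WithZero.coe_inj.mp ((WithZero.coe_unzero hne).trans h)
  rw [h1, toAdd_ofAdd]

lemma intValuation_unit (v : HeightOneSpectrum (𝓞 K)) (u : (𝓞 K)ˣ) :
    v.intValuation (u : 𝓞 K) = 1 := by
  have h1 : v.intValuation (u : 𝓞 K) * v.intValuation ((u⁻¹ : (𝓞 K)ˣ) : 𝓞 K) = 1 := by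
    rw [← map_mul, Units.mul_inv, map_one]
  have h2 : v.intValuation (u : 𝓞 K) ≤ 1 := v.intValuation_le_one _
  have h3 : v.intValuation ((u⁻¹ : (𝓞 K)ˣ) : 𝓞 K) ≤ 1 := v.intValuation_le_one _
  refine le_antisymm h2 ?_
  calc (1 : WithZero (Multiplicative ℤ))
      = v.intValuation (u : 𝓞 K) * v.intValuation ((u⁻¹ : (𝓞 K)ˣ) : 𝓞 K) := h1.symm
    _ ≤ v.intValuation (u : 𝓞 K) * 1 := mul_le_mul_right h3 _
    _ = v.intValuation (u : 𝓞 K) := mul_one _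

lemma finPlaceLog_of_valuation_one {v : HeightOneSpectrum (𝓞 K)} {a : K}
    (h : v.valuation K a = 1) : finPlaceLog v a = 0 := by
  have := finPlaceLog_eq (v := v) (a := a) 0 (by simpa using h)
  simpa using this

lemma finPlaceLog_unit (v : HeightOneSpectrum (𝓞 K)) (u : (𝓞 K)ˣ) :
    finPlaceLog v (algebraMap (𝓞 K) K (u : 𝓞 K)) = 0 := by
  apply finPlaceLog_of_valuation_one
  rw [valuation_of_algebraMap, intValuation_unit]

lemma finite_valuation_ne_one (a : K) (ha : a ≠ 0) :
    {v : HeightOneSpectrum (𝓞 K) | v.valuation K a ≠ 1}.Finite := by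
  obtain ⟨x, y, hy, rfl⟩ := IsFractionRing.div_surjective (A := 𝓞 K) a
  have hy0 : y ≠ 0 := nonZeroDivisors.ne_zero hy
  have hx0 : x ≠ 0 := by
    intro hx
    apply ha
    rw [hx, map_zero, zero_div]
  have key : ∀ z : 𝓞 K, z ≠ 0 →
      {v : HeightOneSpectrum (𝓞 K) | v.intValuation z ≠ 1}.Finite := by
    intro z hz
    refine (Ideal.finite_factors (I := Ideal.span {z})
      (by simpa [Ne, Ideal.span_singleton_eq_bot] using hz)).subset ?_
    intro v hv
    simp only [Set.mem_setOf_eq] at hv ⊢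
    rw [← v.intValuation_lt_one_iff_dvd]
    exact lt_of_le_of_ne (v.intValuation_le_one z) hv
  refine ((key x hx0).union (key y hy0)).subset ?_
  intro v hv
  simp only [Set.mem_setOf_eq, Set.mem_union] at hv ⊢
  by_contra hcon
  push_neg at hcon
  apply hv
  rw [map_div₀, valuation_of_algebraMap, valuation_of_algebraMap, hcon.1, hcon.2, div_one]

lemma finsum_sum_split {A B : Type*} [Fintype B] (f : A ⊕ B → ℝ)
    (hA : (Function.support fun a => f (Sum.inl a)).Finite) :
    ∑ᶠ p, f p = (∑ᶠ a, f (Sum.inl a)) + ∑ b, f (Sum.inr b) := by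
  rw [← finsum_mem_univ f, ← Set.range_inl_union_range_inr,
    finsum_mem_union' Set.isCompl_range_inl_range_inr.disjoint ?h1 ?h2,
    finsum_mem_range Sum.inl_injective, finsum_mem_range Sum.inr_injective]
  · congr 1
    exact finsum_eq_sum_of_fintype _
  case h1 =>
    refine (hA.image Sum.inl).subset ?_
    rintro p ⟨⟨a, rfl⟩, hp⟩
    exact ⟨a, hp, rfl⟩
  case h2 =>
    exact ((Set.finite_range Sum.inr).inter_of_left _)

end WeightsAux

/-- If a nonnegative weight function `w` on the places of a number field `K` satisfies
`∑_v w v · log |a|_v = 0` for every `a ∈ K×` (with the standard normalized absolute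
values, for which the product formula holds), then `w` is constant. -/
theorem weights_product_formula_constant {K : Type*} [Field K] [NumberField K]
    (w : HeightOneSpectrum (𝓞 K) ⊕ InfinitePlace K → ℝ) (hw : ∀ p, 0 ≤ w p)
    (hsum : ∀ a : K, a ≠ 0 → ∑ᶠ p, w p * placeLog p a = 0) :
    ∀ p q, w p = w q := by
  classical
  open IsDedekindDomain.HeightOneSpectrum in
  -- Step 0: split the finsum over the sum type
  have key : ∀ a : K, a ≠ 0 →
      (∑ᶠ v : HeightOneSpectrum (𝓞 K), w (Sum.inl v) * finPlaceLog v a)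
        + ∑ i : InfinitePlace K, w (Sum.inr i) * ((i.mult : ℝ) * Real.log (i a)) = 0 := by
    intro a ha
    have h := hsum a ha
    rwa [WeightsAux.finsum_sum_split] at h
    refine (WeightsAux.finite_valuation_ne_one a ha).subset ?_
    intro v hv
    simp only [Function.mem_support] at hv
    simp only [Set.mem_setOf_eq]
    intro hval
    exact hv (by rw [placeLog, Sum.elim_inl, WeightsAux.finPlaceLog_of_valuation_one hval,
      mul_zero])
  -- Step 1: relation for units
  have huK : ∀ u : (𝓞 K)ˣ, algebraMap (𝓞 K) K (u : 𝓞 K) ≠ 0 := by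
    intro u
    exact (map_ne_zero_iff _ (IsFractionRing.injective (𝓞 K) K)).mpr (Units.ne_zero u)
  have hunit : ∀ u : (𝓞 K)ˣ,
      ∑ i : InfinitePlace K,
        w (Sum.inr i) * ((i.mult : ℝ) * Real.log (i (algebraMap (𝓞 K) K (u : 𝓞 K)))) = 0 := by
    intro u
    have h := key _ (huK u)
    rwa [finsum_eq_zero_of_forall_eq_zero
      (fun v => by rw [WeightsAux.finPlaceLog_unit, mul_zero]), zero_add] at h
  -- Step 2: all infinite places have equal weight
  set w₀ : InfinitePlace K := NumberField.Units.dirichletUnitTheorem.w₀ with hw₀def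
  have hinf : ∀ i : InfinitePlace K, w (Sum.inr i) = w (Sum.inr w₀) := by
    set L : ({i : InfinitePlace K // i ≠ w₀} → ℝ) →ₗ[ℝ] ℝ :=
      ∑ i : {i : InfinitePlace K // i ≠ w₀},
        (w (Sum.inr i.1) - w (Sum.inr w₀)) • LinearMap.proj i with hLdef
    have hLapply : ∀ x, L x = ∑ i : {i : InfinitePlace K // i ≠ w₀},
        (w (Sum.inr i.1) - w (Sum.inr w₀)) * x i := by
      intro x
      rw [hLdef]
      simp [LinearMap.sum_apply, LinearMap.smul_apply, LinearMap.proj_apply, smul_eq_mul]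
    have hvanish : ∀ x ∈ (NumberField.Units.unitLattice K : Set _), x ∈ LinearMap.ker L := by
      intro x hx
      rw [SetLike.mem_coe, NumberField.Units.unitLattice, Submodule.mem_map] at hx
      obtain ⟨y, -, rfl⟩ := hx
      set u : (𝓞 K)ˣ := Additive.toMul y with hu
      have hy : y = Additive.ofMul u := rfl
      simp only [SetLike.mem_coe, LinearMap.mem_ker, AddMonoidHom.coe_toIntLinearMap]
      rw [hLapply]
      have hcomp : ∀ i : {i : InfinitePlace K // i ≠ w₀},
          (NumberField.Units.logEmbedding K y) i
            = (i.1.mult : ℝ) * Real.log (i.1 (algebraMap (𝓞 K) K (u : 𝓞 K))) := by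
        intro i
        rw [hy, NumberField.Units.dirichletUnitTheorem.logEmbedding_component]
      have hB : ∑ i : {i : InfinitePlace K // i ≠ w₀},
          (i.1.mult : ℝ) * Real.log (i.1 (algebraMap (𝓞 K) K (u : 𝓞 K)))
            = -(w₀.mult : ℝ) * Real.log (w₀ (algebraMap (𝓞 K) K (u : 𝓞 K))) := by
        have := NumberField.Units.dirichletUnitTheorem.sum_logEmbedding_component (K := K) u
        rw [hy] at hcomp
        calc ∑ i : {i : InfinitePlace K // i ≠ w₀},
              (i.1.mult : ℝ) * Real.log (i.1 (algebraMap (𝓞 K) K (u : 𝓞 K)))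
            = ∑ i, (NumberField.Units.logEmbedding K (Additive.ofMul u)) i :=
              (Finset.sum_congr rfl fun i _ => (hcomp i).symm)
          _ = -(w₀.mult : ℝ) * Real.log (w₀ (algebraMap (𝓞 K) K (u : 𝓞 K))) := this
      set F : InfinitePlace K → ℝ := fun i =>
        w (Sum.inr i) * ((i.mult : ℝ) * Real.log (i (algebraMap (𝓞 K) K (u : 𝓞 K)))) with hF
      have hA : ∑ i : {i : InfinitePlace K // i ≠ w₀}, F i.1 = -F w₀ := by
        have hsub : ∑ i ∈ Finset.univ.erase w₀, F i
            = ∑ i : {i : InfinitePlace K // i ≠ w₀}, F i.1 :=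
          Finset.sum_subtype _ (fun i => by simp [Finset.mem_erase]) F
        have hins : F w₀ + ∑ i ∈ Finset.univ.erase w₀, F i = ∑ i, F i :=
          Finset.add_sum_erase _ F (Finset.mem_univ w₀)
        have htot : ∑ i : InfinitePlace K, F i = 0 := hunit u
        rw [htot] at hins
        linarith [hsub ▸ hins]
      calc ∑ i : {i : InfinitePlace K // i ≠ w₀},
            (w (Sum.inr i.1) - w (Sum.inr w₀)) * (NumberField.Units.logEmbedding K y) i
          = ∑ i : {i : InfinitePlace K // i ≠ w₀},
            (F i.1 - w (Sum.inr w₀) *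
              ((i.1.mult : ℝ) * Real.log (i.1 (algebraMap (𝓞 K) K (u : 𝓞 K))))) := by
            refine Finset.sum_congr rfl fun i _ => ?_
            rw [hcomp i, hF]
            ring
        _ = (∑ i : {i : InfinitePlace K // i ≠ w₀}, F i.1) - w (Sum.inr w₀) *
              ∑ i : {i : InfinitePlace K // i ≠ w₀},
                (i.1.mult : ℝ) * Real.log (i.1 (algebraMap (𝓞 K) K (u : 𝓞 K))) := by
            rw [Finset.sum_sub_distrib, Finset.mul_sum]
        _ = 0 := by
            rw [hA, hB, hF]
            ring
    have hker : ∀ x, L x = 0 := by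
      have hle : Submodule.span ℝ (NumberField.Units.unitLattice K : Set _) ≤ LinearMap.ker L :=
        Submodule.span_le.mpr hvanish
      rw [NumberField.Units.dirichletUnitTheorem.unitLattice_span_eq_top] at hle
      intro x
      exact hle (Submodule.mem_top) 
    intro i
    by_cases hi : i = w₀
    · rw [hi]
    · have h0 := hker (Pi.single ⟨i, hi⟩ 1)
      rw [hLapply] at h0
      simp only [Pi.single_apply, mul_ite, mul_one, mul_zero,
        Finset.sum_ite_eq', Finset.mem_univ, if_true] at h0
      linarith
  -- Step 3: finite places
  have hfin : ∀ v : HeightOneSpectrum (𝓞 K), w (Sum.inl v) = w (Sum.inr w₀) := by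
    intro v
    set hcard := Fintype.card (ClassGroup (𝓞 K)) with hcdef
    have hcard0 : hcard ≠ 0 := Fintype.card_ne_zero
    have hv0 : v.asIdeal ≠ 0 := v.ne_bot
    have hmem : v.asIdeal ∈ nonZeroDivisors (Ideal (𝓞 K)) := mem_nonZeroDivisors_of_ne_zero hv0
    have hprin : (v.asIdeal ^ hcard).IsPrincipal := by
      have hsub : (⟨v.asIdeal ^ hcard, pow_mem hmem hcard⟩ : nonZeroDivisors (Ideal (𝓞 K)))
          = (⟨v.asIdeal, hmem⟩ : nonZeroDivisors (Ideal (𝓞 K))) ^ hcard := Subtype.ext (by simp)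
      have h1 : ClassGroup.mk0 (⟨v.asIdeal ^ hcard, pow_mem hmem hcard⟩ : nonZeroDivisors (Ideal (𝓞 K))) = 1 := by
        rw [hsub, map_pow]
        exact pow_card_eq_one
      exact (ClassGroup.mk0_eq_one_iff _).mp h1
    obtain ⟨α, hα⟩ := hprin.principal
    have hα0 : α ≠ 0 := by
      intro h0
      rw [h0] at hα
      have hbot : v.asIdeal ^ hcard = 0 := by
        rw [Ideal.zero_eq_bot, hα]
        simp
      exact hv0 ((pow_eq_zero_iff hcard0).mp hbot)
    have hspan : Ideal.span {α} = v.asIdeal ^ hcard := hα.symm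
    have hvval : v.intValuation α
        = ((Multiplicative.ofAdd (-(hcard : ℤ)) : Multiplicative ℤ)
            : WithZero (Multiplicative ℤ)) := by
      rw [IsDedekindDomain.HeightOneSpectrum.intValuation_apply,
        v.intValuationDef_if_neg hα0]
      have hcount : (Associates.mk v.asIdeal).count
          (Associates.mk (Ideal.span {α})).factors = hcard := by
        rw [hspan, Associates.mk_pow,
          Associates.count_pow (Associates.mk_ne_zero.mpr hv0) v.associates_irreducible,
          Associates.count_self v.associates_irreducible, mul_one]
      rw [hcount]
      rfl
    have hqval : ∀ q : HeightOneSpectrum (𝓞 K), q ≠ v → q.intValuation α = 1 := by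
      intro q hq
      rw [IsDedekindDomain.HeightOneSpectrum.intValuation_apply,
        q.intValuationDef_if_neg hα0]
      have hc : (Associates.mk q.asIdeal).count
          (Associates.mk (Ideal.span {α})).factors = 0 := by
        rw [hspan, Associates.mk_pow,
          Associates.count_pow (Associates.mk_ne_zero.mpr hv0) q.associates_irreducible]
        suffices h0 : (Associates.mk q.asIdeal).count (Associates.mk v.asIdeal).factors = 0 by
          rw [h0, mul_zero]
        by_contra hne0
        have hdvd : q.asIdeal ∣ v.asIdeal :=
          (Associates.count_ne_zero_iff_dvd hv0 q.irreducible).mp hne0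
        have heq : q.asIdeal = v.asIdeal :=
          associated_iff_eq.mp (q.prime.associated_of_dvd v.prime hdvd)
        exact hq (IsDedekindDomain.HeightOneSpectrum.ext heq)
      rw [hc]
      simp
    set aK : K := algebraMap (𝓞 K) K α with haKdef
    have haK : aK ≠ 0 := (map_ne_zero_iff _ (IsFractionRing.injective (𝓞 K) K)).mpr hα0
    have hfs : (∑ᶠ q : HeightOneSpectrum (𝓞 K), w (Sum.inl q) * finPlaceLog q aK)
        = w (Sum.inl v) * ((-(hcard : ℤ) : ℝ) * Real.log (Ideal.absNorm v.asIdeal)) := by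
      rw [finsum_eq_single _ v ?_]
      · rw [WeightsAux.finPlaceLog_eq (-(hcard : ℤ))
          (by rw [IsDedekindDomain.HeightOneSpectrum.valuation_of_algebraMap, hvval])]
        push_cast
        ring
      · intro q hq
        rw [WeightsAux.finPlaceLog_of_valuation_one
          (by rw [IsDedekindDomain.HeightOneSpectrum.valuation_of_algebraMap, hqval q hq]),
          mul_zero]
    have hnormeq : Ideal.absNorm (v.asIdeal ^ hcard) = (Algebra.norm ℤ α).natAbs := by
      rw [← hspan, Ideal.absNorm_span_singleton]
    have hprod : ∑ i : InfinitePlace K, (i.mult : ℝ) * Real.log (i aK)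
        = (hcard : ℝ) * Real.log (Ideal.absNorm v.asIdeal) := by
      have hne : ∀ i : InfinitePlace K, i aK ≠ 0 :=
        fun i => ne_of_gt (InfinitePlace.pos_iff.mpr haK)
      calc ∑ i : InfinitePlace K, (i.mult : ℝ) * Real.log (i aK)
          = ∑ i : InfinitePlace K, Real.log ((i aK) ^ i.mult) := by
            simp [Real.log_pow]
        _ = Real.log (∏ i : InfinitePlace K, (i aK) ^ i.mult) :=
            (Real.log_prod fun i _ => pow_ne_zero _ (hne i)).symm
        _ = Real.log ((|Algebra.norm ℚ aK| : ℚ) : ℝ) := by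
            rw [InfinitePlace.prod_eq_abs_norm]
        _ = Real.log ((Ideal.absNorm (v.asIdeal ^ hcard) : ℝ)) := by
            congr 1
            rw [hnormeq, haKdef, ← NumberField.RingOfIntegers.coe_eq_algebraMap,
              ← Algebra.coe_norm_int]
            push_cast [Nat.cast_natAbs]
            norm_num
        _ = (hcard : ℝ) * Real.log (Ideal.absNorm v.asIdeal) := by
            rw [map_pow]
            push_cast
            rw [Real.log_pow]
    have h3 := key aK haK
    rw [hfs] at h3
    have h4 : ∑ i : InfinitePlace K, w (Sum.inr i) * ((i.mult : ℝ) * Real.log (i aK))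
        = w (Sum.inr w₀) * ((hcard : ℝ) * Real.log (Ideal.absNorm v.asIdeal)) := by
      calc ∑ i : InfinitePlace K, w (Sum.inr i) * ((i.mult : ℝ) * Real.log (i aK))
          = ∑ i : InfinitePlace K, w (Sum.inr w₀) * ((i.mult : ℝ) * Real.log (i aK)) :=
            Finset.sum_congr rfl fun i _ => by rw [hinf i]
        _ = w (Sum.inr w₀) * ∑ i : InfinitePlace K, (i.mult : ℝ) * Real.log (i aK) :=
            (Finset.mul_sum _ _ _).symm
        _ = w (Sum.inr w₀) * ((hcard : ℝ) * Real.log (Ideal.absNorm v.asIdeal)) := by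
            rw [hprod]
    rw [h4] at h3
    have hL : 0 < Real.log (Ideal.absNorm v.asIdeal) := by
      apply Real.log_pos
      have h0 : Ideal.absNorm v.asIdeal ≠ 0 := by
        rw [Ne, Ideal.absNorm_eq_zero_iff]
        exact hv0
      have h1 : Ideal.absNorm v.asIdeal ≠ 1 := by
        rw [Ne, Ideal.absNorm_eq_one_iff]
        exact v.isPrime.ne_top
      have : 1 < Ideal.absNorm v.asIdeal := by omega
      exact_mod_cast this
    have hX : (0 : ℝ) < (hcard : ℝ) * Real.log (Ideal.absNorm v.asIdeal) :=
      mul_pos (by exact_mod_cast Nat.pos_of_ne_zero hcard0) hL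
    have h5 : (w (Sum.inr w₀) - w (Sum.inl v))
        * ((hcard : ℝ) * Real.log (Ideal.absNorm v.asIdeal)) = 0 := by
      push_cast at h3 ⊢
      ring_nf
      ring_nf at h3
      linarith
    rcases mul_eq_zero.mp h5 with h6 | h6
    · linarith
    · exact absurd h6 (ne_of_gt hX)
  have hall : ∀ p, w p = w (Sum.inr w₀) := by
    rintro (v | i)
    exacts [hfin v, hinf i]
  intro p q
  rw [hall p, hall q]
end

section
/- Let K ⊆ F be a finite field extension and let |·| be a pseudo-absolute value on F such that |x| ∈ {0,1,∞} for every x ∈ K. Then |x| ∈ {0,1,∞} for every x ∈ F. -/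
open scoped ENNReal

/-- A finite set with a total transitive relation has a maximum element. -/
lemma PAV.exists_rel_max {α : Type*} [DecidableEq α] (r : α → α → Prop) (s : Finset α) :
    s.Nonempty →
    (∀ a ∈ s, ∀ b ∈ s, r a b ∨ r b a) →
    (∀ a ∈ s, ∀ b ∈ s, ∀ c ∈ s, r a b → r b c → r a c) →
    ∃ j ∈ s, ∀ i ∈ s, r i j := by
  classical
  induction s using Finset.cons_induction with
  | empty => intro hs _ _; exact absurd hs (by simp)
  | cons x s hx ih =>
    intro _ htot htrans
    rcases s.eq_empty_or_nonempty with h | h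
    · subst h
      refine ⟨x, by simp, ?_⟩
      intro i hi
      simp only [Finset.mem_cons, Finset.notMem_empty, or_false] at hi
      subst hi
      rcases htot i (by simp) i (by simp) with h | h <;> exact h
    · obtain ⟨j, hjs, hmax⟩ := ih h
        (fun a ha b hb => htot a (Finset.mem_cons_of_mem ha) b (Finset.mem_cons_of_mem hb))
        (fun a ha b hb c hc => htrans a (Finset.mem_cons_of_mem ha)
          b (Finset.mem_cons_of_mem hb) c (Finset.mem_cons_of_mem hc))
      have hjx : j ∈ Finset.cons x s hx := Finset.mem_cons_of_mem hjs
      rcases htot x (Finset.mem_cons_self x s) j hjx with h1 | h1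
      · refine ⟨j, hjx, ?_⟩
        intro i hi
        rcases Finset.mem_cons.mp hi with rfl | hi
        · exact h1
        · exact hmax i hi
      · refine ⟨x, Finset.mem_cons_self x s, ?_⟩
        intro i hi
        rcases Finset.mem_cons.mp hi with rfl | hi
        · rcases htot i (Finset.mem_cons_self i s) i (Finset.mem_cons_self i s) with h | h <;>
            exact h
        · exact htrans i (Finset.mem_cons_of_mem hi) j hjx x (Finset.mem_cons_self x s)
            (hmax i hi) h1

/-- Triangle inequality for finite sums. -/
lemma PAV.f_sum_le {R : Type*} [CommRing R] {f : R → ℝ≥0∞} (hf : IsPseudoAbsValue f)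
    {ι : Type*} (s : Finset ι) (g : ι → R) :
    f (∑ i ∈ s, g i) ≤ ∑ i ∈ s, f (g i) := by
  classical
  induction s using Finset.induction with
  | empty => simp [hf.1]
  | @insert x s hx ih =>
    rw [Finset.sum_insert hx, Finset.sum_insert hx]
    exact le_trans (hf.2.2.1 _ _) (add_le_add le_rfl ih)

/-- If a pseudo-absolute value on a finite field extension `F` of `K` takes only the
values `{0,1,∞}` on `K`, then it takes only the values `{0,1,∞}` on all of `F`. -/
theorem pseudoAbsValue_trivial_of_trivial_on_base {K F : Type*} [Field K] [Field F]
    [Algebra K F] [FiniteDimensional K F]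
    (f : F → ℝ≥0∞) (hf : IsPseudoAbsValue f)
    (hK : ∀ x : K, f (algebraMap K F x) ∈ ({0, 1, ⊤} : Set ℝ≥0∞)) :
    ∀ x : F, f x ∈ ({0, 1, ⊤} : Set ℝ≥0∞) := by
  classical
  obtain ⟨f0, f1, tri, fmul⟩ := hf
  -- multiplicativity when neither factor has value ⊤
  have fmul' : ∀ x y : F, f x ≠ ⊤ → f y ≠ ⊤ → f (x * y) = f x * f y := by
    intro x y hx hy
    exact fmul x y (by tauto)
  -- f(-1) = 1
  have hneg1 : f (-1 : F) = 1 := by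
    have h : f ((-1 : F) * (-1)) = f (-1) * f (-1) := by
      apply fmul
      rintro (⟨h0, ht⟩ | ⟨ht, h0⟩) <;> rw [h0] at ht <;> simp at ht
    rw [show ((-1 : F) * (-1)) = 1 by ring, f1] at h
    rcases lt_trichotomy (f (-1 : F)) 1 with hlt | heq | hgt
    · have : f (-1 : F) * f (-1 : F) < 1 := by
        calc f (-1 : F) * f (-1 : F) ≤ 1 * f (-1 : F) := mul_le_mul_left hlt.le _
        _ = f (-1 : F) := one_mul _
        _ < 1 := hlt
      rw [← h] at this; exact absurd this (lt_irrefl _)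
    · exact heq
    · have : (1 : ℝ≥0∞) < f (-1 : F) * f (-1 : F) := by
        calc (1 : ℝ≥0∞) < f (-1 : F) := hgt
        _ = f (-1 : F) * 1 := (mul_one _).symm
        _ ≤ f (-1 : F) * f (-1 : F) := mul_le_mul_right hgt.le _
      rw [← h] at this; exact absurd this (lt_irrefl _)
  -- f(-z) = f z
  have hneg : ∀ z : F, f (-z) = f z := by
    intro z
    have h : f ((-1 : F) * z) = f (-1) * f z := by
      apply fmul
      rw [hneg1]
      rintro (⟨h0, _⟩ | ⟨h0, _⟩) <;> simp at h0
    rw [hneg1, one_mul] at h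
    rw [← h, neg_one_mul]
  -- powers
  have hpow : ∀ y : F, f y ≠ 0 → f y ≠ ⊤ → ∀ m : ℕ, f (y ^ m) = (f y) ^ m := by
    intro y hy0 hyt m
    induction m with
    | zero => simpa using f1
    | succ m ih =>
      rw [pow_succ, pow_succ, ← ih]
      apply fmul'
      · rw [ih]; exact ENNReal.pow_ne_top hyt
      · exact hyt
  -- inverses of things on K
  have hKinv : ∀ c : K, c ≠ 0 →
      f (algebraMap K F c) ≤ 1 ∨ f (algebraMap K F c⁻¹) ≤ 1 := by
    intro c hc
    rcases hK c with h | h | h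
    · exact Or.inl (by rw [h]; exact zero_le_one)
    · exact Or.inl (le_of_eq h)
    · right
      have hu : (algebraMap K F c) * (algebraMap K F c⁻¹) = 1 := by
        rw [← map_mul, mul_inv_cancel₀ hc, map_one]
      by_contra hgt
      have hne0 : f (algebraMap K F c⁻¹) ≠ 0 := by
        intro h0; rw [h0] at hgt; exact hgt zero_le_one
      have := fmul (algebraMap K F c) (algebraMap K F c⁻¹) (by
        rintro (⟨h0, _⟩ | ⟨_, h0⟩)
        · rw [h0] at h; simp at h
        · exact hne0 h0)
      rw [hu, f1, h, ENNReal.top_mul hne0] at this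
      simp at this
  set n := Module.finrank K F with hn
  -- key boundedness lemma
  have key : ∀ y : F, 1 < f y → f y ≠ ⊤ → f y ≤ (n : ℝ≥0∞) := by
    intro y ht1 htop
    have ht0 : f y ≠ 0 := by
      intro h; rw [h] at ht1; simp at ht1
    set v : Fin (n + 1) → F := fun i => y ^ (i : ℕ) with hv
    have hli : ¬ LinearIndependent K v := by
      intro h
      have := h.fintype_card_le_finrank
      simp [← hn] at this
    obtain ⟨a, hsum, i0, hi0⟩ := Fintype.not_linearIndependent_iff.mp hli
    set s : Finset (Fin (n + 1)) := Finset.univ.filter (fun i => a i ≠ 0) with hs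
    have hsne : s.Nonempty := ⟨i0, by simp [hs, hi0]⟩
    have hmem : ∀ i ∈ s, a i ≠ 0 := by
      intro i hi; simpa [hs] using hi
    -- find a "maximal" coefficient
    obtain ⟨j, hjs, hjmax⟩ := PAV.exists_rel_max
      (fun i i' => f (algebraMap K F (a i * (a i')⁻¹)) ≤ 1) s hsne
      (by
        intro i hi i' hi'
        have h := hKinv (a i * (a i')⁻¹) (by
          exact mul_ne_zero (hmem i hi) (inv_ne_zero (hmem i' hi')))
        rcases h with h | h
        · exact Or.inl h
        · right
          have : (a i * (a i')⁻¹)⁻¹ = a i' * (a i)⁻¹ := by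
            rw [mul_inv_rev, inv_inv, mul_comm]
          rwa [this] at h)
      (by
        intro i1 h1 i2 h2 i3 h3 r12 r23
        have heq : a i1 * (a i3)⁻¹ = (a i1 * (a i2)⁻¹) * (a i2 * (a i3)⁻¹) := by
          rw [show (a i1 * (a i2)⁻¹) * (a i2 * (a i3)⁻¹)
              = a i1 * ((a i2)⁻¹ * a i2) * (a i3)⁻¹ by ring,
            inv_mul_cancel₀ (hmem i2 h2), mul_one]
        rw [heq, map_mul]
        rw [fmul' _ _ (by exact ne_top_of_le_ne_top ENNReal.one_ne_top r12)
          (by exact ne_top_of_le_ne_top ENNReal.one_ne_top r23)]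
        calc f (algebraMap K F (a i1 * (a i2)⁻¹)) * f (algebraMap K F (a i2 * (a i3)⁻¹))
            ≤ 1 * 1 := mul_le_mul' r12 r23
          _ = 1 := one_mul 1)
    have haj : a j ≠ 0 := hmem j hjs
    set b : Fin (n + 1) → K := fun i => a i * (a j)⁻¹ with hb
    have hb1 : ∀ i, f (algebraMap K F (b i)) ≤ 1 := by
      intro i
      by_cases hai : a i = 0
      · simp [hb, hai, f0]
      · exact hjmax i (by simp [hs, hai])
    have hbj : b j = 1 := mul_inv_cancel₀ haj
    -- the scaled relation
    have hbsum : ∑ i, algebraMap K F (b i) * y ^ (i : ℕ) = 0 := by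
      have h1 : ∑ i, algebraMap K F (a i) * y ^ (i : ℕ) = 0 := by
        rw [← hsum]
        exact Finset.sum_congr rfl (fun i _ => by rw [Algebra.smul_def])
      calc ∑ i, algebraMap K F (b i) * y ^ (i : ℕ)
          = (∑ i, algebraMap K F (a i) * y ^ (i : ℕ)) * algebraMap K F (a j)⁻¹ := by
            rw [Finset.sum_mul]
            exact Finset.sum_congr rfl (fun i _ => by rw [hb, map_mul]; ring)
        _ = 0 := by rw [h1, zero_mul]
    -- the top coefficient with value 1
    set T : Finset (Fin (n + 1)) :=
      Finset.univ.filter (fun i => f (algebraMap K F (b i)) = 1) with hT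
    have hTne : T.Nonempty := ⟨j, by simp [hT, hbj, f1]⟩
    set j' : Fin (n + 1) := T.max' hTne with hj'
    have hj'T : j' ∈ T := T.max'_mem hTne
    have hj'1 : f (algebraMap K F (b j')) = 1 := by
      have := hj'T; simpa [hT] using this
    have hzero : ∀ i : Fin (n + 1), j' < i → f (algebraMap K F (b i)) = 0 := by
      intro i hi
      have hiT : i ∉ T := by
        intro hiT
        exact absurd (T.le_max' i hiT) (not_le.mpr hi)
      have hne1 : f (algebraMap K F (b i)) ≠ 1 := by
        intro h; exact hiT (by simp [hT, h])
      rcases hK (b i) with h | h | h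
      · exact h
      · exact absurd h hne1
      · exact absurd (h ▸ hb1 i) (by simp)
    -- main computation
    have eq1 : algebraMap K F (b j') * y ^ (j' : ℕ)
        = -∑ i ∈ Finset.univ.erase j', algebraMap K F (b i) * y ^ (i : ℕ) := by
      apply eq_neg_of_add_eq_zero_left
      rw [Finset.add_sum_erase Finset.univ (fun i : Fin (n+1) => algebraMap K F (b i) * y ^ (i : ℕ)) (Finset.mem_univ j')]
      exact hbsum
    have hL : f (algebraMap K F (b j') * y ^ (j' : ℕ)) = (f y) ^ (j' : ℕ) := by
      rw [fmul' _ _ (by rw [hj'1]; exact ENNReal.one_ne_top) (by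
        rw [hpow y ht0 htop]; exact ENNReal.pow_ne_top htop)]
      rw [hj'1, one_mul, hpow y ht0 htop]
    have hterm : ∀ i : Fin (n + 1),
        f (algebraMap K F (b i) * y ^ (i : ℕ)) = f (algebraMap K F (b i)) * (f y) ^ (i : ℕ) := by
      intro i
      rw [fmul' _ _ (ne_top_of_le_ne_top ENNReal.one_ne_top (hb1 i)) (by
        rw [hpow y ht0 htop]; exact ENNReal.pow_ne_top htop), hpow y ht0 htop]
    have hmain : (f y) ^ (j' : ℕ)
        ≤ ∑ i ∈ Finset.univ.erase j', f (algebraMap K F (b i) * y ^ (i : ℕ)) := by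
      rw [← hL, eq1, hneg]
      exact PAV.f_sum_le ⟨f0, f1, tri, fmul⟩ _ _
    rcases Nat.eq_zero_or_eq_succ_pred (j' : ℕ) with hj0 | hjsucc
    · -- j' = 0 : contradiction
      exfalso
      have hsum0 : ∀ i ∈ Finset.univ.erase j',
          f (algebraMap K F (b i) * y ^ (i : ℕ)) = 0 := by
        intro i hi
        have hij : i ≠ j' := (Finset.mem_erase.mp hi).1
        have hvi : (i : ℕ) ≠ (j' : ℕ) := fun h => hij (Fin.ext h)
        have hlt : j' < i := by
          rw [Fin.lt_def]; omega
        rw [hterm i, hzero i hlt, zero_mul]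
      have : (f y) ^ (j' : ℕ) ≤ 0 := by
        calc (f y) ^ (j' : ℕ) ≤ _ := hmain
          _ = 0 := Finset.sum_eq_zero hsum0
      rw [hj0, pow_zero] at this
      simp at this
    · -- j' = k + 1
      set k := (j' : ℕ) - 1 with hk
      have hjk : (j' : ℕ) = k + 1 := hjsucc
      have hbound : ∀ i ∈ Finset.univ.erase j',
          f (algebraMap K F (b i) * y ^ (i : ℕ)) ≤ (f y) ^ k := by
        intro i hi
        have hij : i ≠ j' := (Finset.mem_erase.mp hi).1
        rcases lt_or_gt_of_ne hij with hlt | hgt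
        · rw [hterm i]
          calc f (algebraMap K F (b i)) * (f y) ^ (i : ℕ)
              ≤ 1 * (f y) ^ (i : ℕ) := mul_le_mul_left (hb1 i) _
            _ = (f y) ^ (i : ℕ) := one_mul _
            _ ≤ (f y) ^ k := by
                have h' : (i : ℕ) < (j' : ℕ) := hlt
                exact pow_le_pow_right₀ ht1.le (by omega)
        · rw [hterm i, hzero i hgt, zero_mul]
          exact zero_le
      have hcard : (Finset.univ.erase j').card = n := by
        rw [Finset.card_erase_of_mem (Finset.mem_univ j')]
        simp
      have h2 : (f y) ^ (j' : ℕ) ≤ (n : ℝ≥0∞) * (f y) ^ k := by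
        calc (f y) ^ (j' : ℕ) ≤ _ := hmain
          _ ≤ (Finset.univ.erase j').card • (f y) ^ k :=
              Finset.sum_le_card_nsmul _ _ _ hbound
          _ = (n : ℝ≥0∞) * (f y) ^ k := by rw [hcard, nsmul_eq_mul]
      rw [hjk, pow_succ, mul_comm ((f y) ^ k) (f y)] at h2
      exact (ENNReal.mul_le_mul_iff_left (pow_ne_zero k ht0) (ENNReal.pow_ne_top htop)).mp h2
  -- no element has finite value > 1
  have claim : ∀ y : F, f y ≠ ⊤ → f y ≤ 1 := by
    intro y htop
    by_contra hgt
    have ht1 : 1 < f y := not_le.mp hgt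
    have ht0 : f y ≠ 0 := by intro h; rw [h] at ht1; simp at ht1
    set w : NNReal := (f y).toNNReal with hw
    have hwy : f y = (w : ℝ≥0∞) := (ENNReal.coe_toNNReal htop).symm
    have hw1 : 1 < w := by
      rw [hwy] at ht1
      exact_mod_cast ht1
    obtain ⟨m, hm⟩ := pow_unbounded_of_one_lt (max (n : NNReal) 1) hw1
    have hm1 : 1 < f (y ^ m) := by
      rw [hpow y ht0 htop, hwy, ← ENNReal.coe_pow]
      exact_mod_cast lt_of_le_of_lt (le_max_right _ 1) hm
    have hmt : f (y ^ m) ≠ ⊤ := by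
      rw [hpow y ht0 htop]; exact ENNReal.pow_ne_top htop
    have := key (y ^ m) hm1 hmt
    rw [hpow y ht0 htop, hwy, ← ENNReal.coe_pow] at this
    have hn' : (w ^ m : NNReal) ≤ (n : NNReal) := by exact_mod_cast this
    exact absurd (lt_of_le_of_lt (le_max_left _ 1) hm) (not_lt.mpr hn')
  -- conclude
  intro x
  by_cases h0 : f x = 0
  · exact Or.inl h0
  by_cases ht : f x = ⊤
  · exact Or.inr (Or.inr ht)
  refine Or.inr (Or.inl ?_)
  have hx0 : x ≠ 0 := by intro h; rw [h, f0] at h0; exact h0 rfl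
  have hle : f x ≤ 1 := claim x ht
  have hinv : f x * f x⁻¹ = 1 := by
    rw [← fmul x x⁻¹ (by tauto), mul_inv_cancel₀ hx0, f1]
  have hinveq : f x⁻¹ = (f x)⁻¹ := by
    have h1 : (f x)⁻¹ * (f x * f x⁻¹) = (f x)⁻¹ * 1 := by rw [hinv]
    rw [← mul_assoc, ENNReal.inv_mul_cancel h0 ht, one_mul, mul_one] at h1
    exact h1
  have hinvt : f x⁻¹ ≠ ⊤ := by
    rw [hinveq]
    simp [h0]
  have := claim x⁻¹ hinvt
  rw [hinveq] at this
  exact le_antisymm hle (by rwa [ENNReal.inv_le_one] at this)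
end

section
/- Let G be a finite group acting by homeomorphisms on a locally compact Hausdorff topological space X, let Y = X/G be the orbit space with the quotient topology and r : X → Y the quotient map, and assume Y is locally compact Hausdorff. Let ν be a Radon measure on Y. Then there exists a unique G-invariant Radon measure μ on X such that the pushforward r_*μ equals ν. -/
open MeasureTheory Set TopologicalSpace ENNReal NNReal

section RadonLiftAux

variable {G X : Type*} [Group G] [Fintype G] [MulAction G X]

/-- Counting function: `∑ g, 1_A (g • x)`. -/
noncomputable def rlHfun (G : Type*) {X : Type*} [Group G] [Fintype G] [MulAction G X]
    (A : Set X) (x : X) : ℝ≥0∞ :=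
  ∑ g : G, A.indicator (1 : X → ℝ≥0∞) (g • x)

lemma rlHfun_smul (A : Set X) (g : G) (x : X) : rlHfun G A (g • x) = rlHfun G A x := by
  unfold rlHfun
  exact Fintype.sum_bijective (· * g) (Group.mulRight_bijective g)
    (fun a => A.indicator (1 : X → ℝ≥0∞) (a • (g • x)))
    (fun a => A.indicator (1 : X → ℝ≥0∞) (a • x))
    (fun a => by simp [mul_smul])

/-- Descend `rlHfun` to the orbit space. -/
noncomputable def rlFfun (G : Type*) {X : Type*} [Group G] [Fintype G] [MulAction G X]
    (A : Set X) : Quotient (MulAction.orbitRel G X) → ℝ≥0∞ :=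
  Quotient.lift (rlHfun G A) (fun a b h => by
    obtain ⟨g, rfl⟩ := h
    exact rlHfun_smul A g b)

lemma rlFfun_mk (A : Set X) (x : X) :
    rlFfun G A (Quotient.mk (MulAction.orbitRel G X) x) = rlHfun G A x := rfl

lemma rlHfun_mono {A B : Set X} (h : A ⊆ B) (x : X) : rlHfun G A x ≤ rlHfun G B x :=
  Finset.sum_le_sum fun _ _ =>
    Set.indicator_le_indicator_of_subset h (fun _ => zero_le) _

lemma rlFfun_mono {A B : Set X} (h : A ⊆ B) (y : Quotient (MulAction.orbitRel G X)) :
    rlFfun G A y ≤ rlFfun G B y :=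
  Quotient.inductionOn y fun x => rlHfun_mono h x

lemma rlHfun_union {A B : Set X} (h : Disjoint A B) (x : X) :
    rlHfun G (A ∪ B) x = rlHfun G A x + rlHfun G B x := by
  unfold rlHfun
  rw [← Finset.sum_add_distrib]
  refine Finset.sum_congr rfl fun g _ => ?_
  rw [Set.indicator_union_of_disjoint h]

lemma rlFfun_union {A B : Set X} (h : Disjoint A B) (y : Quotient (MulAction.orbitRel G X)) :
    rlFfun G (A ∪ B) y = rlFfun G A y + rlFfun G B y :=
  Quotient.inductionOn y fun x => rlHfun_union h x

lemma rlHfun_union_le (A B : Set X) (x : X) :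
    rlHfun G (A ∪ B) x ≤ rlHfun G A x + rlHfun G B x := by
  unfold rlHfun
  rw [← Finset.sum_add_distrib]
  refine Finset.sum_le_sum fun g _ => ?_
  by_cases hA : g • x ∈ A
  · by_cases hB : g • x ∈ B <;>
      simp [Set.indicator_apply, hA, hB]
  · by_cases hB : g • x ∈ B <;>
      simp [Set.indicator_apply, hA, hB]

lemma rlFfun_union_le (A B : Set X) (y : Quotient (MulAction.orbitRel G X)) :
    rlFfun G (A ∪ B) y ≤ rlFfun G A y + rlFfun G B y :=
  Quotient.inductionOn y fun x => rlHfun_union_le A B x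

lemma rlHfun_le_card (A : Set X) (x : X) :
    rlHfun G A x ≤ (Fintype.card G : ℝ≥0∞) := by
  calc rlHfun G A x ≤ ∑ _g : G, (1 : ℝ≥0∞) := by
        refine Finset.sum_le_sum fun g _ => ?_
        by_cases h : g • x ∈ A <;> simp [Set.indicator_apply, h]
    _ = (Fintype.card G : ℝ≥0∞) := by
        simp [Finset.sum_const, Finset.card_univ]

lemma rl_mk_smul (g : G) (x : X) :
    Quotient.mk (MulAction.orbitRel G X) (g • x) = Quotient.mk (MulAction.orbitRel G X) x :=
  Quotient.sound (MulAction.mem_orbit x g)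

lemma rlHfun_le_indicator_image (A : Set X) (x : X) :
    rlHfun G A x ≤ (Fintype.card G : ℝ≥0∞) *
      (Set.indicator (Quotient.mk (MulAction.orbitRel G X) '' A) 1
        (Quotient.mk (MulAction.orbitRel G X) x)) := by
  by_cases h : ∃ g : G, g • x ∈ A
  · obtain ⟨g, hg⟩ := h
    have hmem : Quotient.mk (MulAction.orbitRel G X) x ∈
        Quotient.mk (MulAction.orbitRel G X) '' A := ⟨g • x, hg, rl_mk_smul g x⟩
    rw [Set.indicator_of_mem hmem]
    simpa using rlHfun_le_card A x
  · have hz : rlHfun G A x = 0 :=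
      Finset.sum_eq_zero fun g _ => Set.indicator_of_notMem (fun hg => h ⟨g, hg⟩) _
    simp [hz]

lemma rlHfun_preimage (L : Set (Quotient (MulAction.orbitRel G X))) (x : X) :
    rlHfun G (Quotient.mk (MulAction.orbitRel G X) ⁻¹' L) x =
      (Fintype.card G : ℝ≥0∞) * L.indicator 1 (Quotient.mk (MulAction.orbitRel G X) x) := by
  unfold rlHfun
  have hterm : ∀ g : G,
      (Quotient.mk (MulAction.orbitRel G X) ⁻¹' L).indicator (1 : X → ℝ≥0∞) (g • x)
        = L.indicator 1 (Quotient.mk (MulAction.orbitRel G X) x) := by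
    intro g
    by_cases h : Quotient.mk (MulAction.orbitRel G X) x ∈ L
    · rw [Set.indicator_of_mem (by simp [Set.mem_preimage, rl_mk_smul g x, h]),
        Set.indicator_of_mem h]
      rfl
    · rw [Set.indicator_of_notMem (by simp [Set.mem_preimage, rl_mk_smul g x, h]),
        Set.indicator_of_notMem h]
  rw [Finset.sum_congr rfl fun g _ => hterm g, Finset.sum_const, Finset.card_univ,
    nsmul_eq_mul]

lemma rlHfun_smul_image (A : Set X) (g : G) (x : X) :
    rlHfun G ((g • ·) '' A) x = rlHfun G A x := by
  refine (Fintype.sum_bijective (g * ·) (Group.mulLeft_bijective g)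
    (fun a => A.indicator (1 : X → ℝ≥0∞) (a • x))
    (fun a => ((g • ·) '' A).indicator (1 : X → ℝ≥0∞) (a • x)) (fun a => ?_)).symm
  have hiff : (g * a) • x ∈ (g • ·) '' A ↔ a • x ∈ A := by
    rw [mul_smul]
    constructor
    · rintro ⟨z, hz, hzz⟩
      obtain rfl : z = a • x := (smul_left_cancel_iff g).mp (by simpa using hzz)
      exact hz
    · intro h
      exact ⟨a • x, h, rfl⟩
  show A.indicator (1 : X → ℝ≥0∞) (a • x)
      = ((fun x => g • x) '' A).indicator (1 : X → ℝ≥0∞) ((g * a) • x)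
  by_cases h : a • x ∈ A
  · rw [Set.indicator_of_mem h, Set.indicator_of_mem (hiff.mpr h)]
    rfl
  · rw [Set.indicator_of_notMem h, Set.indicator_of_notMem (fun hc => h (hiff.mp hc))]

variable [TopologicalSpace X] [ContinuousConstSMul G X]

lemma rlHfun_usc {K : Set X} (hK : IsClosed K) : UpperSemicontinuous (rlHfun G K) := by
  unfold rlHfun
  exact upperSemicontinuous_sum fun g _ =>
    UpperSemicontinuous.comp (hK.upperSemicontinuous_indicator (zero_le_one)) (continuous_const_smul g)

lemma rlFfun_measurable [MeasurableSpace (Quotient (MulAction.orbitRel G X))]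
    [BorelSpace (Quotient (MulAction.orbitRel G X))]
    {K : Set X} (hK : IsClosed K) : Measurable (rlFfun G K) := by
  apply measurable_of_Ici
  intro t
  have hcl : IsClosed (rlFfun G K ⁻¹' Set.Ici t) := by
    rw [← (MulAction.isOpenQuotientMap_quotientMk (Γ := G)
      (T := X)).isQuotientMap.isClosed_preimage]
    have heq : Quotient.mk (MulAction.orbitRel G X) ⁻¹' (rlFfun G K ⁻¹' Set.Ici t)
        = rlHfun G K ⁻¹' Set.Ici t := rfl
    rw [heq, show rlHfun G K ⁻¹' Set.Ici t = (rlHfun G K ⁻¹' Set.Iio t)ᶜ by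
      ext x; simp [not_lt]]
    exact ((rlHfun_usc (G := G) hK).isOpen_preimage t).isClosed_compl
  exact hcl.measurableSet

variable [T2Space X] [T2Space (Quotient (MulAction.orbitRel G X))]
  [MeasurableSpace (Quotient (MulAction.orbitRel G X))]
  [BorelSpace (Quotient (MulAction.orbitRel G X))]
  (ν : Measure (Quotient (MulAction.orbitRel G X))) [IsFiniteMeasureOnCompacts ν]

lemma rl_lint_le_image {K : Set X}
    (hmeas : MeasurableSet (Quotient.mk (MulAction.orbitRel G X) '' K)) :
    ∫⁻ y, rlFfun G K y ∂ν ≤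
      (Fintype.card G : ℝ≥0∞) * ν (Quotient.mk (MulAction.orbitRel G X) '' K) := by
  calc ∫⁻ y, rlFfun G K y ∂ν
      ≤ ∫⁻ y, (Fintype.card G : ℝ≥0∞) *
          (Set.indicator (Quotient.mk (MulAction.orbitRel G X) '' K) 1 y) ∂ν :=
        lintegral_mono fun y => Quotient.inductionOn y fun x =>
          rlHfun_le_indicator_image K x
    _ = (Fintype.card G : ℝ≥0∞) * ν (Quotient.mk (MulAction.orbitRel G X) '' K) := by
        rw [lintegral_const_mul' _ _ (ENNReal.natCast_ne_top _),
          lintegral_indicator_one hmeas]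

lemma rl_lint_ne_top {K : Set X} (hK : IsCompact K) :
    ∫⁻ y, rlFfun G K y ∂ν ≠ ∞ := by
  have hcont : Continuous (Quotient.mk (MulAction.orbitRel G X)) :=
    (MulAction.isOpenQuotientMap_quotientMk (Γ := G) (T := X)).continuous
  have himg : IsCompact (Quotient.mk (MulAction.orbitRel G X) '' K) := hK.image hcont
  exact ne_top_of_le_ne_top
    (ENNReal.mul_ne_top (ENNReal.natCast_ne_top _) himg.measure_lt_top.ne)
    (rl_lint_le_image ν himg.isClosed.measurableSet)

/-- The content on `X` induced by a measure on the orbit space. -/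
noncomputable def rlContent : Content X where
  toFun K := (∫⁻ y, rlFfun G (K : Set X) y ∂ν).toNNReal
  mono' K₁ K₂ h :=
    ENNReal.toNNReal_mono (rl_lint_ne_top ν K₂.isCompact)
      (lintegral_mono fun y => rlFfun_mono h y)
  sup_disjoint' K₁ K₂ hd _ _ := by
    have h1 := rl_lint_ne_top (G := G) ν K₁.isCompact
    have h2 := rl_lint_ne_top (G := G) ν K₂.isCompact
    have heq : ∫⁻ y, rlFfun G ((K₁ ⊔ K₂ : Compacts X) : Set X) y ∂ν
        = (∫⁻ y, rlFfun G (K₁ : Set X) y ∂ν) + ∫⁻ y, rlFfun G (K₂ : Set X) y ∂ν := by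
      rw [show ((K₁ ⊔ K₂ : Compacts X) : Set X) = (K₁ : Set X) ∪ K₂ from rfl]
      rw [lintegral_congr fun y => rlFfun_union hd y]
      exact lintegral_add_left (rlFfun_measurable K₁.isCompact.isClosed) _
    rw [heq, ENNReal.toNNReal_add h1 h2]
  sup_le' K₁ K₂ := by
    have h1 := rl_lint_ne_top (G := G) ν K₁.isCompact
    have h2 := rl_lint_ne_top (G := G) ν K₂.isCompact
    have hle : ∫⁻ y, rlFfun G ((K₁ ⊔ K₂ : Compacts X) : Set X) y ∂ν
        ≤ (∫⁻ y, rlFfun G (K₁ : Set X) y ∂ν) + ∫⁻ y, rlFfun G (K₂ : Set X) y ∂ν := by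
      rw [show ((K₁ ⊔ K₂ : Compacts X) : Set X) = (K₁ : Set X) ∪ K₂ from rfl]
      calc ∫⁻ y, rlFfun G ((K₁ : Set X) ∪ K₂) y ∂ν
          ≤ ∫⁻ y, (rlFfun G (K₁ : Set X) y + rlFfun G (K₂ : Set X) y) ∂ν :=
            lintegral_mono fun y => rlFfun_union_le _ _ y
        _ = _ := lintegral_add_left (rlFfun_measurable K₁.isCompact.isClosed) _
    have h3 := ENNReal.toNNReal_mono (by exact ENNReal.add_ne_top.mpr ⟨h1, h2⟩) hle
    rw [ENNReal.toNNReal_add h1 h2] at h3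
    exact h3

lemma rlContent_apply (K : Compacts X) :
    rlContent ν K = ∫⁻ y, rlFfun G (K : Set X) y ∂ν :=
  ENNReal.coe_toNNReal (rl_lint_ne_top ν K.isCompact)

end RadonLiftAux


/-- Let a finite group `G` act by homeomorphisms on a locally compact Hausdorff space
`X`, with locally compact Hausdorff orbit space `Y = X/G` (with the quotient topology)
and quotient map `r : X → Y`. Every Radon measure `ν` on `Y` lifts to a unique
`G`-invariant Radon measure `μ` on `X` with `r_*μ = ν`. -/
theorem existsUnique_invariant_radon_lift {G X : Type*} [Group G] [Finite G]
    [TopologicalSpace X] [LocallyCompactSpace X] [T2Space X]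
    [MulAction G X] [ContinuousConstSMul G X]
    [MeasurableSpace X] [BorelSpace X]
    [LocallyCompactSpace (Quotient (MulAction.orbitRel G X))]
    [T2Space (Quotient (MulAction.orbitRel G X))]
    [MeasurableSpace (Quotient (MulAction.orbitRel G X))]
    [BorelSpace (Quotient (MulAction.orbitRel G X))]
    (ν : Measure (Quotient (MulAction.orbitRel G X))) (hν : ν.Regular) :
    ∃! μ : Measure X, μ.Regular ∧ (∀ g : G, μ.map (g • ·) = μ) ∧
      μ.map (Quotient.mk (MulAction.orbitRel G X)) = ν := by
  classical
  cases nonempty_fintype G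
  haveI := hν
  set n : ℝ≥0∞ := (Fintype.card G : ℝ≥0∞) with hn
  have hn0 : n ≠ 0 := by simp [hn, Fintype.card_ne_zero]
  have hntop : n ≠ ∞ := by simp [hn]
  have hcont : Continuous (Quotient.mk (MulAction.orbitRel G X)) :=
    (MulAction.isOpenQuotientMap_quotientMk (Γ := G) (T := X)).continuous
  have hopen : IsOpenMap (Quotient.mk (MulAction.orbitRel G X)) :=
    (MulAction.isOpenQuotientMap_quotientMk (Γ := G) (T := X)).isOpenMap
  have hsurj : Function.Surjective (Quotient.mk (MulAction.orbitRel G X)) :=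
    (MulAction.isOpenQuotientMap_quotientMk (Γ := G) (T := X)).surjective
  have hrmeas : Measurable (Quotient.mk (MulAction.orbitRel G X)) := hcont.measurable
  have hsm : ∀ g : G, Measurable ((g • ·) : X → X) := fun g =>
    (continuous_const_smul g).measurable
  -- saturation of sets under the action
  have hsat : ∀ S : Set X, Quotient.mk (MulAction.orbitRel G X) ⁻¹'
      (Quotient.mk (MulAction.orbitRel G X) '' S) = ⋃ g : G, (g • ·) '' S := by
    intro S
    ext z
    constructor
    · intro hz
      obtain ⟨w, hw, hww⟩ := hz
      obtain ⟨g, hg⟩ := Quotient.exact hww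
      refine Set.mem_iUnion.2 ⟨g⁻¹, w, hw, ?_⟩
      show g⁻¹ • w = z
      rw [← hg, inv_smul_smul]
    · intro hz
      obtain ⟨g, w, hw, hww⟩ := by simpa [Set.mem_iUnion] using hz
      refine Set.mem_preimage.2 ⟨w, hw, ?_⟩
      rw [← hww]
      exact (rl_mk_smul g w).symm
  have hclosedmap : IsClosedMap (Quotient.mk (MulAction.orbitRel G X)) := by
    intro C hC
    rw [← (MulAction.isOpenQuotientMap_quotientMk (Γ := G)
      (T := X)).isQuotientMap.isClosed_preimage, hsat C]
    exact isClosed_iUnion_of_finite fun g => (Homeomorph.smul g).isClosedMap C hC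
  have hproper : IsProperMap (Quotient.mk (MulAction.orbitRel G X)) := by
    rw [isProperMap_iff_isClosedMap_and_compact_fibers]
    refine ⟨hcont, hclosedmap, fun y => ?_⟩
    obtain ⟨x, rfl⟩ := hsurj y
    refine (Set.Finite.subset (Set.finite_range (fun g : G => g • x)) ?_).isCompact
    intro z hz
    obtain ⟨g, hg⟩ := Quotient.exact (hz : _)
    exact ⟨g, hg⟩
  set c : Content X := rlContent (G := G) ν with hc
  set μ0 : Measure X := n⁻¹ • c.measure with hμ0
  have hreg0 : μ0.Regular := Measure.Regular.smul (ENNReal.inv_ne_top.mpr hn0)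
  -- the measure of the preimage of an open set
  have hst1 : ∀ U : Set (Quotient (MulAction.orbitRel G X)), IsOpen U →
      c.measure (Quotient.mk (MulAction.orbitRel G X) ⁻¹' U) = n * ν U := by
    intro U hU
    have hUX : IsOpen (Quotient.mk (MulAction.orbitRel G X) ⁻¹' U) := hU.preimage hcont
    rw [c.measure_apply hUX.measurableSet, c.outerMeasure_of_isOpen _ hUX]
    refine le_antisymm ?_ ?_
    · unfold Content.innerContent
      refine iSup₂_le fun K hKU => ?_
      have himg : IsCompact (Quotient.mk (MulAction.orbitRel G X) '' (K : Set X)) :=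
        K.isCompact.image hcont
      have hb : (c K : ℝ≥0∞) ≤
          n * ν (Quotient.mk (MulAction.orbitRel G X) '' (K : Set X)) := by
        rw [hc, rlContent_apply]
        exact rl_lint_le_image ν himg.isClosed.measurableSet
      have hKU' : (K : Set X) ⊆ Quotient.mk (MulAction.orbitRel G X) ⁻¹' U := hKU
      have himgsub : Quotient.mk (MulAction.orbitRel G X) '' (K : Set X) ⊆ U :=
        Set.image_subset_iff.mpr hKU'
      exact hb.trans (mul_le_mul_right (measure_mono himgsub) _)
    · rw [hν.innerRegular.measure_eq_iSup hU, ENNReal.mul_iSup]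
      refine iSup_le fun L => ?_
      rw [ENNReal.mul_iSup]
      refine iSup_le fun hLU => ?_
      rw [ENNReal.mul_iSup]
      refine iSup_le fun hLc => ?_
      have hKc : IsCompact (Quotient.mk (MulAction.orbitRel G X) ⁻¹' L) :=
        hproper.isCompact_preimage hLc
      have hval : (c ⟨_, hKc⟩ : ℝ≥0∞) = n * ν L := by
        rw [hc, rlContent_apply]
        calc ∫⁻ y, rlFfun G (Quotient.mk (MulAction.orbitRel G X) ⁻¹' L) y ∂ν
            = ∫⁻ y, n * L.indicator 1 y ∂ν :=
              lintegral_congr fun y => Quotient.inductionOn y fun x =>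
                rlHfun_preimage L x
          _ = n * ν L := by
              rw [lintegral_const_mul' _ _ hntop,
                lintegral_indicator_one hLc.isClosed.measurableSet]
      rw [← hval]
      exact c.le_innerContent ⟨_, hKc⟩ ⟨_, hUX⟩ (fun x hx => hLU hx)
  have hst1' : ∀ U : Set (Quotient (MulAction.orbitRel G X)), IsOpen U →
      μ0 (Quotient.mk (MulAction.orbitRel G X) ⁻¹' U) = ν U := by
    intro U hU
    rw [hμ0, Measure.smul_apply, smul_eq_mul, hst1 U hU, ← mul_assoc,
      ENNReal.inv_mul_cancel hn0 hntop, one_mul]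
  -- pushforward computation
  have hpush : ∀ B : Set (Quotient (MulAction.orbitRel G X)), MeasurableSet B →
      μ0 (Quotient.mk (MulAction.orbitRel G X) ⁻¹' B) = ν B := by
    intro B hB
    refine le_antisymm ?_ ?_
    · rw [Set.measure_eq_iInf_isOpen B ν]
      refine le_iInf fun U => le_iInf fun hBU => le_iInf fun hU => ?_
      rw [← hst1' U hU]
      exact measure_mono (Set.preimage_mono hBU)
    · rw [Set.measure_eq_iInf_isOpen (Quotient.mk (MulAction.orbitRel G X) ⁻¹' B) μ0]
      refine le_iInf fun V => le_iInf fun hsub => le_iInf fun hV => ?_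
      set W : Set X := ⋂ g : G, (g • ·) ⁻¹' V with hW
      have hWopen : IsOpen W :=
        isOpen_iInter_of_finite fun g => hV.preimage (continuous_const_smul g)
      have hBW : Quotient.mk (MulAction.orbitRel G X) ⁻¹' B ⊆ W := by
        intro x hx
        refine Set.mem_iInter.2 fun g => ?_
        refine hsub ?_
        show Quotient.mk (MulAction.orbitRel G X) (g • x) ∈ B
        rw [rl_mk_smul g x]
        exact hx
      have hWsat : Quotient.mk (MulAction.orbitRel G X) ⁻¹'
          (Quotient.mk (MulAction.orbitRel G X) '' W) = W := by
        rw [hsat W]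
        apply Set.Subset.antisymm
        · refine Set.iUnion_subset fun g => ?_
          rintro z ⟨w, hw, rfl⟩
          refine Set.mem_iInter.2 fun g' => ?_
          have hmem := Set.mem_iInter.1 hw (g' * g)
          rw [Set.mem_preimage] at hmem
          show g' • (g • w) ∈ V
          rwa [← mul_smul]
        · intro w hw
          exact Set.mem_iUnion.2 ⟨1, w, hw, one_smul G w⟩
      have hBim : B ⊆ Quotient.mk (MulAction.orbitRel G X) '' W := by
        intro b hb
        obtain ⟨x, rfl⟩ := hsurj b
        exact ⟨x, hBW hb, rfl⟩
      have hWV : W ⊆ V := by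
        intro x hx
        have := Set.mem_iInter.1 hx 1
        rwa [Set.mem_preimage, one_smul] at this
      calc ν B ≤ ν (Quotient.mk (MulAction.orbitRel G X) '' W) := measure_mono hBim
        _ = μ0 (Quotient.mk (MulAction.orbitRel G X) ⁻¹'
            (Quotient.mk (MulAction.orbitRel G X) '' W)) :=
            (hst1' _ (hopen W hWopen)).symm
        _ = μ0 W := by rw [hWsat]
        _ ≤ μ0 V := measure_mono hWV
  have hmap0 : μ0.map (Quotient.mk (MulAction.orbitRel G X)) = ν := by
    ext s hs
    rw [Measure.map_apply hrmeas hs]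
    exact hpush s hs
  -- invariance
  have hcsm : ∀ (g : G) (K : Compacts X),
      c (K.map _ (Homeomorph.smul g).continuous) = c K := by
    intro g K
    have hKset : ((K.map _ (Homeomorph.smul g).continuous : Compacts X) : Set X)
        = (g • ·) '' (K : Set X) := rfl
    rw [hc, rlContent_apply, rlContent_apply, hKset]
    exact lintegral_congr fun y => Quotient.inductionOn y fun x =>
      rlHfun_smul_image (K : Set X) g x
  have hinv0 : ∀ g : G, μ0.map (g • ·) = μ0 := by
    intro g
    have hcm : c.measure.map (g • ·) = c.measure := by
      ext s hs
      rw [Measure.map_apply (hsm g) hs, c.measure_apply ((hsm g) hs), c.measure_apply hs]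
      exact c.outerMeasure_preimage (Homeomorph.smul g) (fun K => hcsm g K) s
    rw [hμ0, Measure.map_smul, hcm]
  -- the key formula for any invariant regular lift
  have keyK : ∀ μ' : Measure X, μ'.Regular → (∀ g : G, μ'.map (g • ·) = μ') →
      μ'.map (Quotient.mk (MulAction.orbitRel G X)) = ν →
      ∀ K : Set X, IsCompact K → μ' K = n⁻¹ * ∫⁻ y, rlFfun G K y ∂ν := by
    intro μ' hreg' hinv' hmap' K hK
    have hKm : MeasurableSet K := hK.isClosed.measurableSet
    have h1 : ∀ g : G, μ' ((g • ·) ⁻¹' K) = μ' K := by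
      intro g
      conv_rhs => rw [← hinv' g]
      rw [Measure.map_apply (hsm g) hKm]
    have h2 : ∫⁻ x, rlHfun G K x ∂μ' = n * μ' K := by
      unfold rlHfun
      have hmeasg : ∀ g : G, Measurable fun x : X => K.indicator (1 : X → ℝ≥0∞) (g • x) :=
        fun g => (measurable_one.indicator hKm).comp (hsm g)
      rw [lintegral_finset_sum _ fun g _ => hmeasg g]
      have hterm : ∀ g : G, ∫⁻ x, K.indicator (1 : X → ℝ≥0∞) (g • x) ∂μ' = μ' K := by
        intro g
        have hind : (fun x => K.indicator (1 : X → ℝ≥0∞) (g • x))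
            = ((g • ·) ⁻¹' K).indicator (1 : X → ℝ≥0∞) := by
          ext x
          show K.indicator (1 : X → ℝ≥0∞) (g • x)
              = ((g • ·) ⁻¹' K).indicator (1 : X → ℝ≥0∞) x
          by_cases h : g • x ∈ K
          · have hx : x ∈ (g • ·) ⁻¹' K := h
            rw [Set.indicator_of_mem h, Set.indicator_of_mem hx]
            rfl
          · have hx : x ∉ (g • ·) ⁻¹' K := h
            rw [Set.indicator_of_notMem h, Set.indicator_of_notMem hx]
        rw [hind, lintegral_indicator_one ((hsm g) hKm), h1 g]
      rw [Finset.sum_congr rfl fun g _ => hterm g, Finset.sum_const, Finset.card_univ,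
        nsmul_eq_mul]
    have h3 : ∫⁻ x, rlHfun G K x ∂μ' = ∫⁻ y, rlFfun G K y ∂ν := by
      rw [← hmap', lintegral_map (rlFfun_measurable hK.isClosed) hrmeas]
      rfl
    rw [← h3, h2, ← mul_assoc, ENNReal.inv_mul_cancel hn0 hntop, one_mul]
  -- two regular measures agreeing on compact sets are equal
  have ext2 : ∀ μ₁ μ₂ : Measure X, μ₁.Regular → μ₂.Regular →
      (∀ K : Set X, IsCompact K → μ₁ K = μ₂ K) → μ₁ = μ₂ := by
    intro μ₁ μ₂ h1 h2 hK
    haveI := h1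
    haveI := h2
    have hop : ∀ U : Set X, IsOpen U → μ₁ U = μ₂ U := by
      intro U hU
      rw [h1.innerRegular.measure_eq_iSup hU, h2.innerRegular.measure_eq_iSup hU]
      exact iSup_congr fun K => iSup_congr fun _ => iSup_congr fun hcomp => hK K hcomp
    ext s hs
    rw [Set.measure_eq_iInf_isOpen s μ₁, Set.measure_eq_iInf_isOpen s μ₂]
    exact iInf_congr fun U => iInf_congr fun _ => iInf_congr fun hU => hop U hU
  refine ⟨μ0, ⟨hreg0, hinv0, hmap0⟩, ?_⟩
  rintro μ' ⟨hreg', hinv', hmap'⟩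
  refine ext2 μ' μ0 hreg' hreg0 fun K hK => ?_
  rw [keyK μ' hreg' hinv' hmap' K hK, keyK μ0 hreg0 hinv0 hmap0 K hK]
end
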